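/- arXiv:math/0206059 — 4 statements merged into one kernel-verified Lean document; each statement's English description precedes it below -/
import Mathlib

section
/- Let n ≥ 1 and let p₁ < p₂ < ⋯ < pₙ be prime numbers with 5 ≤ p₁. For each j set ξⱼ = i·√(pⱼ(pⱼ − 2)) ∈ ℂ. Then the field ℚ(ξ₁, …, ξₙ) (the subfield of ℂ generated over ℚ by ξ₁, …, ξₙ) has degree exactly 2ⁿ over ℚ. -/
open IntermediateField Polynomial

/-- The complex number ξ_p = i·√(p(p−2)). -/
noncomputable def xi (p : ℕ) : ℂ :=
  Complex.I * (Real.sqrt ((p : ℝ) * ((p : ℝ) - 2)) : ℝ)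

lemma xi_sq {p : ℕ} (hp : 2 ≤ p) : xi p ^ 2 = -((p * (p - 2) : ℕ) : ℂ) := by
  have h0 : (0:ℝ) ≤ (p : ℝ) * ((p : ℝ) - 2) := by
    have : (2:ℝ) ≤ p := by exact_mod_cast hp
    nlinarith
  have hs : (Real.sqrt ((p : ℝ) * ((p : ℝ) - 2)))^2 = (p : ℝ) * ((p : ℝ) - 2) :=
    Real.sq_sqrt h0
  have hcast : ((p * (p - 2) : ℕ) : ℂ) = ((((p : ℝ) * ((p : ℝ) - 2)) : ℝ) : ℂ) := by
    push_cast [Nat.cast_sub hp]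
    ring
  unfold xi
  rw [mul_pow, Complex.I_sq, ← Complex.ofReal_pow, hs, hcast]
  ring

lemma xi_sq_rat {p : ℕ} (hp : 2 ≤ p) : ∃ r : ℚ, xi p ^ 2 = (r : ℂ) :=
  ⟨-(p * (p - 2) : ℕ), by rw [xi_sq hp]; push_cast; ring⟩

lemma isIntegral_of_sq_rat {x : ℂ} (h : ∃ r : ℚ, x ^ 2 = (r : ℂ)) : IsIntegral ℚ x := by
  obtain ⟨r, hr⟩ := h
  refine ⟨X ^ 2 - C r, monic_X_pow_sub_C r (by norm_num), ?_⟩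
  simp [hr]

/-- Decomposition of elements of `K[y]` when `y * y ∈ K`. -/
lemma exists_add_mul {K : IntermediateField ℚ ℂ} {y : ℂ} (hy : y * y ∈ K) {x : ℂ}
    (hx : x ∈ Algebra.adjoin K {y}) : ∃ a b : ℂ, a ∈ K ∧ b ∈ K ∧ x = a + b * y := by
  induction hx using Algebra.adjoin_induction with
  | mem z hz =>
      rw [Set.mem_singleton_iff] at hz
      exact ⟨0, 1, zero_mem K, one_mem K, by simp [hz]⟩
  | algebraMap r => exact ⟨r, 0, r.2, zero_mem K, by simp⟩
  | add u v hu hv ihu ihv =>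
      obtain ⟨a, b, ha, hb, rfl⟩ := ihu
      obtain ⟨c, d, hc, hd, rfl⟩ := ihv
      exact ⟨a + c, b + d, add_mem ha hc, add_mem hb hd, by ring⟩
  | mul u v hu hv ihu ihv =>
      obtain ⟨a, b, ha, hb, rfl⟩ := ihu
      obtain ⟨c, d, hc, hd, rfl⟩ := ihv
      refine ⟨a * c + b * d * (y * y), a * d + b * c,
        add_mem (mul_mem ha hc) (mul_mem (mul_mem hb hd) hy),
        add_mem (mul_mem ha hd) (mul_mem hb hc), by ring⟩

lemma step_or {K : IntermediateField ℚ ℂ} {y : ℂ} (hy2 : ∃ s : ℚ, y ^ 2 = (s : ℂ)) {x : ℂ}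
    (hx2 : ∃ r : ℚ, x ^ 2 = (r : ℂ)) (hmem : x ∈ IntermediateField.adjoin K {y}) :
    x ∈ K ∨ x * y ∈ K := by
  obtain ⟨s, hs⟩ := hy2
  obtain ⟨r, hr⟩ := hx2
  have hyK : y * y ∈ K := by
    rw [← sq, hs]
    exact_mod_cast SubfieldClass.ratCast_mem K s
  have hint : IsIntegral (↥K) y := (isIntegral_of_sq_rat ⟨s, hs⟩).tower_top
  have hx' : x ∈ (IntermediateField.adjoin K {y}).toSubalgebra := hmem
  rw [show (IntermediateField.adjoin K {y}) = K⟮y⟯ from rfl,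
    IntermediateField.adjoin_simple_toSubalgebra_of_isAlgebraic hint.isAlgebraic] at hx'
  obtain ⟨a, b, ha, hb, rfl⟩ := exists_add_mul hyK hx'
  by_cases hb0 : b = 0
  · left; simpa [hb0] using ha
  by_cases ha0 : a = 0
  · right
    have : (a + b * y) * y = b * (y * y) := by rw [ha0]; ring
    rw [this]
    exact mul_mem hb hyK
  -- both nonzero : show y ∈ K, so x ∈ K
  left
  have hrK : ((r : ℂ)) ∈ K := by exact_mod_cast SubfieldClass.ratCast_mem K r
  have hty : (2 * a * b) * y = (r : ℂ) - a ^ 2 - b ^ 2 * (y * y) := by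
    rw [← hr]; ring
  have htyK : (2 * a * b) * y ∈ K := by
    rw [hty]
    exact sub_mem (sub_mem hrK (pow_mem ha 2)) (mul_mem (pow_mem hb 2) hyK)
  have h2ab : (2 * a * b : ℂ) ≠ 0 := by
    simp [ha0, hb0]
  have hyK' : y ∈ K := by
    have := mul_mem (inv_mem (show (2 * a * b : ℂ) ∈ K from
      mul_mem (mul_mem (by exact_mod_cast SubfieldClass.ratCast_mem K (2:ℚ)) ha) hb)) htyK
    rwa [inv_mul_cancel_left₀ h2ab] at this
  exact add_mem ha (mul_mem hb hyK')

lemma range_fin_succ' {α : Type*} {n : ℕ} (f : Fin (n + 1) → α) :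
    Set.range f = Set.range (f ∘ Fin.castSucc) ∪ {f (Fin.last n)} := by
  ext a
  constructor
  · rintro ⟨j, rfl⟩
    induction j using Fin.lastCases with
    | last => exact Or.inr rfl
    | cast i => exact Or.inl ⟨i, rfl⟩
  · rintro (⟨i, rfl⟩ | h)
    · exact ⟨Fin.castSucc i, rfl⟩
    · exact ⟨Fin.last n, h.symm⟩

/-- Main induction: membership in a multiquadratic extension forces a subset product to be
rational. -/
lemma exists_prod_rat : ∀ (k : ℕ) (ξ : Fin k → ℂ), (∀ j, ∃ s : ℚ, (ξ j) ^ 2 = (s : ℂ)) →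
    ∀ x : ℂ, (∃ r : ℚ, x ^ 2 = (r : ℂ)) →
    x ∈ IntermediateField.adjoin ℚ (Set.range ξ) →
    ∃ (S : Finset (Fin k)) (q : ℚ), x * ∏ j ∈ S, ξ j = (q : ℂ) := by
  intro k
  induction k with
  | zero =>
      intro ξ _ x _ hmem
      have hr : Set.range ξ = ∅ := by simp
      rw [hr, IntermediateField.adjoin_empty] at hmem
      obtain ⟨q, hq⟩ := IntermediateField.mem_bot.mp hmem
      exact ⟨∅, q, by simp [← hq]⟩
  | succ n ih =>
      intro ξ hξ x hx hmem
      set ξ' : Fin n → ℂ := ξ ∘ Fin.castSucc with hξ'def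
      set y : ℂ := ξ (Fin.last n) with hydef
      set K : IntermediateField ℚ ℂ := IntermediateField.adjoin ℚ (Set.range ξ') with hKdef
      have hadj : IntermediateField.adjoin ℚ (Set.range ξ)
          = (IntermediateField.adjoin K {y}).restrictScalars ℚ := by
        rw [range_fin_succ' ξ, ← IntermediateField.adjoin_adjoin_left]
        rfl
      rw [hadj, IntermediateField.mem_restrictScalars] at hmem
      have hy2 : ∃ s : ℚ, y ^ 2 = (s : ℂ) := hξ _
      rcases step_or hy2 hx hmem with hK | hK
      · obtain ⟨S, q, hq⟩ := ih ξ' (fun j => hξ _) x hx hK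
        refine ⟨S.map Fin.castSuccEmb, q, ?_⟩
        rwa [Finset.prod_map]
      · obtain ⟨r, hr⟩ := hx
        obtain ⟨s, hs⟩ := hy2
        have hxy2 : ∃ t : ℚ, (x * y) ^ 2 = (t : ℂ) := ⟨r * s, by push_cast; rw [mul_pow, hr, hs]⟩
        obtain ⟨S, q, hq⟩ := ih ξ' (fun j => hξ _) (x * y) hxy2 hK
        refine ⟨insert (Fin.last n) (S.map Fin.castSuccEmb), q, ?_⟩
        have hnot : Fin.last n ∉ S.map Fin.castSuccEmb := by
          simp only [Finset.mem_map]
          rintro ⟨i, -, hi⟩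
          exact absurd hi (Fin.castSucc_lt_last i).ne
        rw [Finset.prod_insert hnot, Finset.prod_map]
        rw [show x * (y * ∏ j ∈ S, ξ (Fin.castSuccEmb j)) = (x * y) * ∏ j ∈ S, ξ' j by
          simp only [hξ'def]; rw [← mul_assoc]; rfl]
        exact hq

-- number theory lemma
lemma sq_ne_nat (q : ℚ) (P M : ℕ) (hP : P.Prime) (h5 : 5 ≤ P)
    (hM : ¬ P ∣ M) (hM0 : M ≠ 0) : q ^ 2 ≠ ((P * (P - 2) * M : ℕ) : ℚ) := by
  haveI : Fact P.Prime := ⟨hP⟩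
  intro h
  have hP2 : P - 2 ≠ 0 := by omega
  have hN0 : P * (P - 2) * M ≠ 0 := by positivity
  have hq0 : q ≠ 0 := by
    intro h0
    rw [h0] at h
    simp at h
    omega
  have hv2 : padicValRat P (q ^ 2) = 2 * padicValRat P q := padicValRat.pow q
  have hvN : padicValRat P ((P * (P - 2) * M : ℕ) : ℚ) = 1 := by
    rw [padicValRat.of_nat]
    have h1 : padicValNat P (P * (P - 2) * M)
        = padicValNat P (P * (P - 2)) + padicValNat P M :=
      padicValNat.mul (by positivity) hM0
    have h2 : padicValNat P (P * (P - 2)) = padicValNat P P + padicValNat P (P - 2) :=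
      padicValNat.mul hP.pos.ne' hP2
    have h3 : padicValNat P P = 1 := padicValNat.self hP.one_lt
    have h4 : padicValNat P (P - 2) = 0 := padicValNat.eq_zero_of_not_dvd (by
      intro hd
      have := Nat.le_of_dvd (by omega) hd
      omega)
    have h5' : padicValNat P M = 0 := padicValNat.eq_zero_of_not_dvd hM
    rw [h1, h2, h3, h4, h5']
    norm_cast
  rw [h, hvN] at hv2
  omega

lemma xi_notmem {n : ℕ} (p : Fin (n + 1) → ℕ) (hp : ∀ j, (p j).Prime) (hmono : StrictMono p)
    (h5 : ∀ j, 5 ≤ p j) :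
    xi (p (Fin.last n)) ∉
      IntermediateField.adjoin ℚ (Set.range fun j : Fin n => xi (p j.castSucc)) := by
  intro hmem
  have h2 : ∀ j : Fin (n+1), 2 ≤ p j := fun j => le_trans (by norm_num) (h5 j)
  obtain ⟨S, q, hq⟩ := exists_prod_rat n (fun j => xi (p j.castSucc))
    (fun j => xi_sq_rat (h2 j.castSucc)) _ (xi_sq_rat (h2 (Fin.last n))) hmem
  set P : ℕ := p (Fin.last n) with hP
  set M : ℕ := ∏ j ∈ S, (p j.castSucc * (p j.castSucc - 2)) with hM
  -- square the identity
  have hsq : ((q : ℂ)) ^ 2 = (-1) ^ (S.card + 1) * ((P * (P - 2) * M : ℕ) : ℂ) := by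
    rw [← hq, mul_pow, ← Finset.prod_pow]
    have hterm : ∀ j ∈ S, xi (p j.castSucc) ^ 2
        = (-1) * ((p j.castSucc * (p j.castSucc - 2) : ℕ) : ℂ) := by
      intro j _
      rw [xi_sq (h2 j.castSucc)]; ring
    rw [Finset.prod_congr rfl hterm, Finset.prod_mul_distrib, Finset.prod_const,
      xi_sq (h2 (Fin.last n))]
    push_cast [hM]
    ring
  -- P does not divide M
  have hPM : ¬ P ∣ M := by
    intro hd
    rw [hM] at hd
    obtain ⟨j, -, hj⟩ := (Prime.dvd_finset_prod_iff (hp (Fin.last n)).prime _).mp hd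
    have hlt : p j.castSucc < P := hmono (Fin.castSucc_lt_last j)
    rcases (Nat.Prime.dvd_mul (hp (Fin.last n))).mp hj with hd1 | hd1
    · have := (Nat.prime_dvd_prime_iff_eq (hp (Fin.last n)) (hp j.castSucc)).mp hd1
      omega
    · have := Nat.le_of_dvd (by have := h5 j.castSucc; omega) hd1
      omega
  have hM0 : M ≠ 0 := by
    rw [hM]
    apply Finset.prod_ne_zero_iff.mpr
    intro j _
    have := h5 j.castSucc
    exact Nat.mul_ne_zero (by omega) (by omega)
  -- two cases on parity
  rcases Nat.even_or_odd (S.card + 1) with he | ho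
  · -- even: q^2 = N, contradiction with sq_ne_nat
    rw [he.neg_one_pow, one_mul] at hsq
    exact sq_ne_nat q P M (hp _) (h5 _) hPM hM0 (by exact_mod_cast hsq)
  · -- odd: q^2 = -N < 0
    rw [ho.neg_one_pow] at hsq
    have hQ : q ^ 2 = -((P * (P - 2) * M : ℕ) : ℚ) := by
      have hq2 : ((q : ℂ)) ^ 2 = -((P * (P - 2) * M : ℕ) : ℂ) := by rw [hsq]; ring
      exact_mod_cast hq2
    have hpos : (0:ℚ) < ((P * (P - 2) * M : ℕ) : ℚ) := by
      have h5l := h5 (Fin.last n)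
      have : 0 < P * (P - 2) * M :=
        Nat.mul_pos (Nat.mul_pos (by omega) (by omega)) (Nat.pos_of_ne_zero hM0)
      exact_mod_cast this
    nlinarith [sq_nonneg q]

lemma finrank_aux : ∀ (n : ℕ) (p : Fin n → ℕ), (∀ j, (p j).Prime) → StrictMono p →
    (∀ j, 5 ≤ p j) →
    Module.finrank ℚ ↥(IntermediateField.adjoin ℚ (Set.range fun j : Fin n => xi (p j)))
      = 2 ^ n := by
  intro n
  induction n with
  | zero =>
      intro p _ _ _
      have h : (Set.range fun j : Fin 0 => xi (p j)) = ∅ := by simp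
      rw [h, IntermediateField.adjoin_empty, pow_zero, IntermediateField.finrank_bot]
  | succ n ih =>
      intro p hp hmono h5
      have h2 : ∀ j : Fin (n+1), 2 ≤ p j := fun j => le_trans (by norm_num) (h5 j)
      set y : ℂ := xi (p (Fin.last n)) with hy
      set K : IntermediateField ℚ ℂ :=
        IntermediateField.adjoin ℚ (Set.range fun j : Fin n => xi (p j.castSucc)) with hK
      have hadj : IntermediateField.adjoin ℚ (Set.range fun j : Fin (n+1) => xi (p j))
          = (IntermediateField.adjoin K {y}).restrictScalars ℚ := by
        rw [range_fin_succ' fun j : Fin (n+1) => xi (p j), ← IntermediateField.adjoin_adjoin_left]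
        rfl
      have hintY : IsIntegral ℚ y := isIntegral_of_sq_rat (xi_sq_rat (h2 _))
      haveI : FiniteDimensional ℚ K := by
        haveI := (Set.finite_range fun j : Fin n => xi (p j.castSucc)).to_subtype
        exact IntermediateField.finiteDimensional_adjoin (fun x hx => by
          obtain ⟨j, rfl⟩ := hx
          exact isIntegral_of_sq_rat (xi_sq_rat (h2 _)))
      have hintK : IsIntegral (↥K) y := hintY.tower_top
      have hynot : y ∉ K := xi_notmem p hp hmono h5
      -- finrank K K⟮y⟯ = 2
      obtain ⟨s, hs⟩ := xi_sq_rat (p := p (Fin.last n)) (h2 _)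
      have hsK : ((s : ℂ)) ∈ K := by exact_mod_cast SubfieldClass.ratCast_mem K s
      set c : ↥K := ⟨(s : ℂ), hsK⟩ with hc
      have haev : (aeval y) (X ^ 2 - C c : (↥K)[X]) = 0 := by
        simp only [map_sub, map_pow, aeval_X, aeval_C]
        rw [hy, hs]
        simp [hc, IntermediateField.algebraMap_apply]
      have hdegle : (minpoly (↥K) y).natDegree ≤ 2 := by
        have hne : (X ^ 2 - C c : (↥K)[X]) ≠ 0 :=
          (monic_X_pow_sub_C c (by norm_num)).ne_zero
        have := minpoly.degree_le_of_ne_zero (↥K) y hne haev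
        rw [degree_X_pow_sub_C (by norm_num) c] at this
        exact natDegree_le_iff_degree_le.mpr this
      have hdegge : 2 ≤ (minpoly (↥K) y).natDegree := by
        rw [minpoly.two_le_natDegree_iff hintK]
        rintro ⟨k, hk⟩
        exact hynot (hk ▸ k.2)
      haveI : FiniteDimensional (↥K) ↥(IntermediateField.adjoin K {y}) :=
        IntermediateField.adjoin.finiteDimensional hintK
      have hfin2 : Module.finrank (↥K) ↥(IntermediateField.adjoin K {y}) = 2 := by
        rw [show (IntermediateField.adjoin K {y}) = K⟮y⟯ from rfl,
          IntermediateField.adjoin.finrank hintK]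
        omega
      rw [hadj]
      have htower : Module.finrank ℚ ↥((IntermediateField.adjoin K {y}).restrictScalars ℚ)
          = Module.finrank ℚ (↥K) * Module.finrank (↥K) ↥(IntermediateField.adjoin K {y}) :=
        (Module.finrank_mul_finrank ℚ (↥K) ↥(IntermediateField.adjoin K {y})).symm
      have hmono' : StrictMono fun j : Fin n => p j.castSucc :=
        fun a b h => hmono (Fin.castSucc_lt_castSucc_iff.mpr h)
      rw [htower, hfin2, ih (fun j => p j.castSucc) (fun j => hp _) hmono' (fun j => h5 _),
        pow_succ]

/-- For primes 5 ≤ p₁ < ⋯ < pₙ, the field ℚ(ξ₁,…,ξₙ) has degree 2ⁿ over ℚ. -/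
theorem degree_adjoin_xi_eq_two_pow (n : ℕ) (hn : 1 ≤ n) (p : Fin n → ℕ)
    (hp : ∀ j, (p j).Prime) (hmono : StrictMono p) (h5 : ∀ j, 5 ≤ p j) :
    Module.finrank ℚ
      ↥(IntermediateField.adjoin ℚ (Set.range fun j : Fin n => xi (p j))) = 2 ^ n :=
  finrank_aux n p hp hmono h5
end

section
/- Let n ≥ 1 and let p₁ < p₂ < ⋯ < pₙ be prime numbers with 5 ≤ p₁. For each j set ξⱼ = i·√(pⱼ(pⱼ − 2)) ∈ ℂ. Then the field extension ℚ(ξ₁, …, ξₙ)/ℚ is Galois and its Galois group is isomorphic to (ℤ/2ℤ)ⁿ. -/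
lemma elem_abelian_two {G : Type*} [Group G] [Fintype G] {n : ℕ}
    (h2 : ∀ g : G, g * g = 1) (hcard : Fintype.card G = 2 ^ n) :
    Nonempty (G ≃* (Fin n → Multiplicative (ZMod 2))) := by
  have hcomm : ∀ a b : G, a * b = b * a := by
    intro a b
    have hinv : ∀ g : G, g⁻¹ = g := fun g => inv_eq_of_mul_eq_one_left (h2 g)
    calc a * b = (a * b)⁻¹ := (hinv _).symm
    _ = b⁻¹ * a⁻¹ := mul_inv_rev a b
    _ = b * a := by rw [hinv, hinv]
  letI : CommGroup G := { (inferInstance : Group G) with mul_comm := hcomm }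
  letI : Module (ZMod 2) (Additive G) := AddCommGroup.zmodModule (by
    intro x
    show (2 : ℕ) • x = 0
    rw [two_nsmul]
    exact h2 x.toMul)
  haveI : Module.Finite (ZMod 2) (Additive G) := Module.Finite.of_finite
  have hcard2 : Fintype.card (Additive G) = Fintype.card (ZMod 2) ^ Module.finrank (ZMod 2) (Additive G) :=
    Module.card_eq_pow_finrank
  have hrank : Module.finrank (ZMod 2) (Additive G) = n := by
    have : (2:ℕ) ^ Module.finrank (ZMod 2) (Additive G) = 2 ^ n := by
      rw [← hcard]
      simpa [ZMod.card] using hcard2.symm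
    exact Nat.pow_right_injective (le_refl 2) this
  let b : Module.Basis (Fin n) (ZMod 2) (Additive G) := by
    rw [← hrank]; exact Module.finBasis (ZMod 2) (Additive G)
  let e1 : Additive G ≃+ (Fin n → ZMod 2) := b.equivFun.toAddEquiv
  let e2 : G ≃* Multiplicative (Fin n → ZMod 2) := AddEquiv.toMultiplicativeRight e1 -- guess name
  exact ⟨e2.trans (MulEquiv.piMultiplicative (fun _ : Fin n => ZMod 2))⟩

open IntermediateField


/-- the rational number whose square root (times i) is xi -/
def dq (p : ℕ) : ℚ := -((p * (p - 2) : ℕ) : ℚ)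

lemma xi_mul_self {p : ℕ} (hp : 2 ≤ p) : xi p * xi p = ((dq p : ℚ) : ℂ) := by
  have h0 : (0:ℝ) ≤ (p : ℝ) * ((p : ℝ) - 2) := by
    have : (2:ℝ) ≤ (p:ℝ) := by exact_mod_cast hp
    nlinarith
  have h1 : ((Real.sqrt ((p : ℝ) * ((p : ℝ) - 2)) : ℝ) : ℂ) *
      ((Real.sqrt ((p : ℝ) * ((p : ℝ) - 2)) : ℝ) : ℂ) = (((p : ℝ) * ((p : ℝ) - 2) : ℝ) : ℂ) := by
    rw [← Complex.ofReal_mul, Real.mul_self_sqrt h0]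
  have h2 : ((p * (p - 2) : ℕ) : ℝ) = (p : ℝ) * ((p : ℝ) - 2) := by
    push_cast [Nat.cast_sub hp]; ring
  unfold xi dq
  push_cast
  rw [show Complex.I * ((Real.sqrt ((p : ℝ) * ((p : ℝ) - 2)) : ℝ) : ℂ) *
      (Complex.I * ((Real.sqrt ((p : ℝ) * ((p : ℝ) - 2)) : ℝ) : ℂ)) =
      (Complex.I * Complex.I) * (((Real.sqrt ((p : ℝ) * ((p : ℝ) - 2)) : ℝ) : ℂ) *
        ((Real.sqrt ((p : ℝ) * ((p : ℝ) - 2)) : ℝ) : ℂ)) by ring,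
    Complex.I_mul_I, h1]
  push_cast [Nat.cast_sub hp]
  ring

lemma dq_ne_zero {p : ℕ} (hp : 5 ≤ p) : dq p ≠ 0 := by
  unfold dq
  have : 0 < p * (p - 2) := Nat.mul_pos (by omega) (by omega)
  simp only [ne_eq, neg_eq_zero, Nat.cast_eq_zero]
  exact_mod_cast this.ne'

lemma xi_ne_zero {p : ℕ} (hp : 5 ≤ p) : xi p ≠ 0 := by
  intro h
  have := xi_mul_self (by omega : 2 ≤ p)
  rw [h, zero_mul] at this
  exact dq_ne_zero hp (by exact_mod_cast this.symm)

/-- Every element of `F(α)` with `α² ∈ F`, `α ∉ F` is of the form `a + b*α`. -/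
lemma mem_adjoin_quad {S : Set ℂ} {α : ℂ}
    (hα2 : α * α ∈ adjoin ℚ S) (hα : α ∉ adjoin ℚ S) {x : ℂ}
    (hx : x ∈ adjoin ℚ (insert α S)) :
    ∃ a ∈ adjoin ℚ S, ∃ b ∈ adjoin ℚ S, x = a + b * α := by
  set F := adjoin ℚ S with hF
  let E : IntermediateField ℚ ℂ :=
  { carrier := {x | ∃ a ∈ F, ∃ b ∈ F, x = a + b * α}
    mul_mem' := by
      rintro x y ⟨a, ha, b, hb, rfl⟩ ⟨c, hc, d, hd, rfl⟩
      exact ⟨a * c + b * d * (α * α),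
        add_mem (mul_mem ha hc) (mul_mem (mul_mem hb hd) hα2),
        a * d + b * c, add_mem (mul_mem ha hd) (mul_mem hb hc), by ring⟩
    one_mem' := ⟨1, one_mem F, 0, zero_mem F, by ring⟩
    add_mem' := by
      rintro x y ⟨a, ha, b, hb, rfl⟩ ⟨c, hc, d, hd, rfl⟩
      exact ⟨a + c, add_mem ha hc, b + d, add_mem hb hd, by ring⟩
    zero_mem' := ⟨0, zero_mem F, 0, zero_mem F, by ring⟩
    algebraMap_mem' := fun q => ⟨algebraMap ℚ ℂ q, F.algebraMap_mem q, 0, zero_mem F, by ring⟩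
    inv_mem' := by
      rintro x ⟨a, ha, b, hb, rfl⟩
      by_cases hb0 : b = 0
      · exact ⟨a⁻¹, inv_mem ha, 0, zero_mem F, by rw [hb0]; simp⟩
      by_cases hx0 : a + b * α = 0
      · rw [hx0]
        exact ⟨0, zero_mem F, 0, zero_mem F, by simp⟩
      have hsub : a - b * α ≠ 0 := by
        intro h
        apply hα
        have : α = b⁻¹ * a := by
          field_simp at h ⊢
          linear_combination -h
        rw [this]
        exact mul_mem (inv_mem hb) ha
      set c := a * a - b * b * (α * α) with hc
      have hcF : c ∈ F := sub_mem (mul_mem ha ha) (mul_mem (mul_mem hb hb) hα2)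
      have hcne : c ≠ 0 := by
        have : c = (a + b * α) * (a - b * α) := by ring
        rw [this]
        exact mul_ne_zero hx0 hsub
      have hinv : (a + b * α)⁻¹ = a * c⁻¹ + (-(b * c⁻¹)) * α := by
        refine (eq_inv_of_mul_eq_one_left ?_).symm
        field_simp
        ring
      exact ⟨a * c⁻¹, mul_mem ha (inv_mem hcF), -(b * c⁻¹),
        neg_mem (mul_mem hb (inv_mem hcF)), hinv⟩ }
  have hle : adjoin ℚ (insert α S) ≤ E := by
    rw [adjoin_le_iff]
    rintro y (rfl | hy)
    · exact ⟨0, zero_mem F, 1, one_mem F, by ring⟩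
    · exact ⟨y, subset_adjoin ℚ S hy, 0, zero_mem F, by ring⟩
  exact hle hx

lemma padicValRat_prod_zero {P : ℕ} [Fact P.Prime] {ι : Type*} [DecidableEq ι] (T : Finset ι)
    (f : ι → ℚ) (h0 : ∀ j ∈ T, f j ≠ 0) (hv : ∀ j ∈ T, padicValRat P (f j) = 0) :
    (∏ j ∈ T, f j) ≠ 0 ∧ padicValRat P (∏ j ∈ T, f j) = 0 := by
  induction T using Finset.induction_on with
  | empty => simp [padicValRat.one]
  | insert a s hnot ih =>
    rw [Finset.prod_insert hnot]
    have hane : f a ≠ 0 := h0 a (Finset.mem_insert_self a s)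
    obtain ⟨hpne, hpv⟩ := ih (fun j hj => h0 j (Finset.mem_insert_of_mem hj))
      (fun j hj => hv j (Finset.mem_insert_of_mem hj))
    refine ⟨mul_ne_zero hane hpne, ?_⟩
    rw [padicValRat.mul hane hpne, hpv, hv a (Finset.mem_insert_self a s)]
    ring

lemma padicValRat_dq_self {P : ℕ} (hP : P.Prime) (h5 : 5 ≤ P) :
    padicValRat P (dq P) = 1 ∧ dq P ≠ 0 := by
  haveI : Fact P.Prime := ⟨hP⟩
  refine ⟨?_, dq_ne_zero h5⟩
  unfold dq
  rw [padicValRat.neg, padicValRat.of_nat]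
  rw [padicValNat.mul (by omega : P ≠ 0) (by omega : P - 2 ≠ 0),
    padicValNat.self hP.one_lt,
    padicValNat.eq_zero_of_not_dvd (fun h => by
      have := Nat.le_of_dvd (by omega) h; omega)]
  norm_num

lemma padicValRat_dq_lt {P m : ℕ} (hP : P.Prime) (h5 : 5 ≤ m) (hlt : m < P) :
    padicValRat P (dq m) = 0 ∧ dq m ≠ 0 := by
  haveI : Fact P.Prime := ⟨hP⟩
  refine ⟨?_, dq_ne_zero h5⟩
  unfold dq
  rw [padicValRat.neg, padicValRat.of_nat]
  rw [padicValNat.eq_zero_of_not_dvd ?_]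
  · simp
  · intro h
    rcases (Nat.Prime.dvd_mul hP).mp h with h1 | h1 <;>
      exact absurd (Nat.le_of_dvd (by omega) h1) (by omega)

lemma dq_not_square_combo {P : ℕ} (hP : P.Prime) (h5 : 5 ≤ P) {ι : Type*} [DecidableEq ι]
    (T : Finset ι) (m : ι → ℕ) (hm : ∀ j ∈ T, 5 ≤ m j ∧ m j < P) (q : ℚ) :
    dq P ≠ q * q * ∏ j ∈ T, dq (m j) := by
  haveI : Fact P.Prime := ⟨hP⟩
  intro heq
  obtain ⟨hv1, hne⟩ := padicValRat_dq_self hP h5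
  have hq : q ≠ 0 := by
    rintro rfl
    rw [heq] at hne
    simp at hne
  obtain ⟨hpne, hpv⟩ := padicValRat_prod_zero T (fun j => dq (m j))
    (fun j hj => (padicValRat_dq_lt hP (hm j hj).1 (hm j hj).2).2)
    (fun j hj => (padicValRat_dq_lt hP (hm j hj).1 (hm j hj).2).1)
  have := hv1
  rw [heq, padicValRat.mul (mul_ne_zero hq hq) hpne, padicValRat.mul hq hq, hpv] at this
  omega

noncomputable def KK {n : ℕ} (p : Fin n → ℕ) (k : ℕ) : IntermediateField ℚ ℂ :=
  IntermediateField.adjoin ℚ ((fun j => xi (p j)) '' {j : Fin n | (j : ℕ) < k})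

variable {n : ℕ} {p : Fin n → ℕ}

lemma not_mem_of_rep (hp : ∀ j, (p j).Prime) (hmono : StrictMono p) (h5 : ∀ j, 5 ≤ p j)
    {k : ℕ} (hk : k < n)
    (C : ∀ x ∈ KK p k, (∃ r : ℚ, x * x = (r : ℂ)) →
      ∃ q : ℚ, ∃ T : Finset (Fin n), (∀ j ∈ T, (j : ℕ) < k) ∧ x = (q : ℂ) * ∏ j ∈ T, xi (p j)) :
    xi (p ⟨k, hk⟩) ∉ KK p k := by
  set κ : Fin n := ⟨k, hk⟩
  intro hmem
  obtain ⟨q, T, hT, hrep⟩ := C _ hmem ⟨dq (p κ), xi_mul_self (by have := h5 κ; omega)⟩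
  have hsq : ((dq (p κ) : ℚ) : ℂ) = ((q * q * ∏ j ∈ T, dq (p j) : ℚ) : ℂ) := by
    rw [← xi_mul_self (by have := h5 κ; omega : 2 ≤ p κ), hrep]
    push_cast
    rw [show ((q:ℂ) * ∏ j ∈ T, xi (p j)) * ((q:ℂ) * ∏ j ∈ T, xi (p j)) =
      (q:ℂ) * (q:ℂ) * ((∏ j ∈ T, xi (p j)) * ∏ j ∈ T, xi (p j)) by ring,
      ← Finset.prod_mul_distrib]
    congr 1
    exact Finset.prod_congr rfl fun j _ => xi_mul_self (by have := h5 j; omega)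
  have heq : dq (p κ) = q * q * ∏ j ∈ T, dq (p j) := by exact_mod_cast hsq
  exact dq_not_square_combo (hp κ) (h5 κ) T (fun j => p j)
    (fun j hj => ⟨h5 j, hmono (show j < κ from Fin.lt_def.mpr (hT j hj))⟩) q heq

lemma set_insert_lemma {k : ℕ} (hk : k < n) :
    ((fun j => xi (p j)) '' {j : Fin n | (j : ℕ) < k + 1}) =
      insert (xi (p ⟨k, hk⟩)) ((fun j => xi (p j)) '' {j : Fin n | (j : ℕ) < k}) := by
  rw [show {j : Fin n | (j : ℕ) < k + 1} = insert ⟨k, hk⟩ {j : Fin n | (j : ℕ) < k} from ?_,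
    Set.image_insert_eq]
  ext j
  simp [Fin.ext_iff]
  omega

lemma repC (hp : ∀ j, (p j).Prime) (hmono : StrictMono p) (h5 : ∀ j, 5 ≤ p j) (k : ℕ) :
    ∀ x ∈ KK p k, (∃ r : ℚ, x * x = (r : ℂ)) →
      ∃ q : ℚ, ∃ T : Finset (Fin n), (∀ j ∈ T, (j : ℕ) < k) ∧
        x = (q : ℂ) * ∏ j ∈ T, xi (p j) := by
  induction k with
  | zero =>
    intro x hx _
    have h0 : KK p 0 = ⊥ := by
      unfold KK
      rw [show ((fun j => xi (p j)) '' {j : Fin n | (j : ℕ) < 0}) = (∅ : Set ℂ) by simp]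
      exact IntermediateField.adjoin_empty ℚ ℂ
    rw [h0, IntermediateField.mem_bot] at hx
    obtain ⟨q, rfl⟩ := hx
    exact ⟨q, ∅, by simp, by simp [eq_ratCast (algebraMap ℚ ℂ) q]⟩
  | succ k ih =>
    by_cases hk : k < n
    · set κ : Fin n := ⟨k, hk⟩
      set α := xi (p κ) with hαdef
      have h2le : 2 ≤ p κ := by have := h5 κ; omega
      have hα2 : α * α ∈ KK p k := by
        rw [xi_mul_self h2le, ← eq_ratCast (algebraMap ℚ ℂ) (dq (p κ))]
        exact (KK p k).algebraMap_mem _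
      have hα : α ∉ KK p k := not_mem_of_rep hp hmono h5 hk ih
      intro x hx hr
      unfold KK at hx
      rw [set_insert_lemma hk] at hx
      obtain ⟨a, ha, b, hb, rfl⟩ := mem_adjoin_quad hα2 hα hx
      obtain ⟨r, hr⟩ := hr
      have hrmem : ((r : ℚ) : ℂ) ∈ KK p k := by
        rw [← eq_ratCast (algebraMap ℚ ℂ) r]
        exact (KK p k).algebraMap_mem _
      have hmem2 : (2 * a * b) * α ∈ KK p k := by
        have hkey : (2 * a * b) * α = (r : ℂ) - a * a - b * b * (α * α) := by
          linear_combination hr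
        rw [hkey]
        exact sub_mem (sub_mem hrmem (mul_mem ha ha)) (mul_mem (mul_mem hb hb) hα2)
      by_cases hb0 : b = 0
      · subst hb0
        obtain ⟨q, T, hT, harep⟩ := ih a ha ⟨r, by linear_combination hr⟩
        exact ⟨q, T, fun j hj => (hT j hj).trans (Nat.lt_succ_self k), by rw [harep]; ring⟩
      by_cases ha0 : a = 0
      · subst ha0
        have hdc : ((dq (p κ) : ℚ) : ℂ) ≠ 0 := by
          exact_mod_cast dq_ne_zero (h5 κ)
        have hbb : b * b = ((r / dq (p κ) : ℚ) : ℂ) := by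
          push_cast
          rw [eq_div_iff hdc, ← xi_mul_self h2le]
          linear_combination hr
        obtain ⟨q, T, hT, hbrep⟩ := ih b hb ⟨r / dq (p κ), hbb⟩
        have hκT : κ ∉ T := fun h => absurd (hT κ h) (by simp [κ])
        refine ⟨q, insert κ T, ?_, ?_⟩
        · intro j hj
          rcases Finset.mem_insert.mp hj with rfl | hj'
          · exact Nat.lt_succ_self k
          · exact (hT j hj').trans (Nat.lt_succ_self k)
        · rw [Finset.prod_insert hκT, hbrep]
          ring
      · exfalso
        apply hα
        have h2mem : (2 : ℂ) ∈ KK p k := by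
          have := intCast_mem (KK p k) 2
          exact_mod_cast this
        have h2ab : (2 : ℂ) * a * b ≠ 0 :=
          mul_ne_zero (mul_ne_zero two_ne_zero ha0) hb0
        have : α = (2 * a * b)⁻¹ * (2 * a * b * α) := by
          field_simp
        rw [this]
        exact mul_mem (inv_mem (mul_mem (mul_mem h2mem ha) hb)) hmem2
    · have hset : {j : Fin n | (j : ℕ) < k + 1} = {j : Fin n | (j : ℕ) < k} := by
        ext j
        have := j.2
        simp only [Set.mem_setOf_eq]
        omega
      intro x hx hr
      unfold KK at hx
      rw [hset] at hx
      obtain ⟨q, T, hT, hrep⟩ := ih x hx hr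
      exact ⟨q, T, fun j hj => (hT j hj).trans (Nat.lt_succ_self k), hrep⟩

open Polynomial in
lemma finrank_KK (hp : ∀ j, (p j).Prime) (hmono : StrictMono p) (h5 : ∀ j, 5 ≤ p j) :
    ∀ k, k ≤ n → FiniteDimensional ℚ (KK p k) ∧ Module.finrank ℚ (KK p k) = 2 ^ k := by
  intro k
  induction k with
  | zero =>
    intro _
    have h0 : KK p 0 = ⊥ := by
      unfold KK
      rw [show ((fun j => xi (p j)) '' {j : Fin n | (j : ℕ) < 0}) = (∅ : Set ℂ) by simp]
      exact IntermediateField.adjoin_empty ℚ ℂ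
    rw [h0]
    exact ⟨inferInstance, IntermediateField.finrank_bot⟩
  | succ k ih =>
    intro hk1
    have hk : k < n := hk1
    obtain ⟨hFD, hfr⟩ := ih (le_of_lt hk)
    set κ : Fin n := ⟨k, hk⟩
    set α := xi (p κ) with hαdef
    have h2le : 2 ≤ p κ := by have := h5 κ; omega
    have hα2 : α * α ∈ KK p k := by
      rw [xi_mul_self h2le, ← eq_ratCast (algebraMap ℚ ℂ) (dq (p κ))]
      exact (KK p k).algebraMap_mem _
    have hα : α ∉ KK p k := not_mem_of_rep hp hmono h5 hk (repC hp hmono h5 k)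
    set c : KK p k := ⟨α * α, hα2⟩ with hc
    have hroot : (Polynomial.aeval α) (X ^ 2 - C c : Polynomial (KK p k)) = 0 := by
      simp only [map_sub, map_pow, aeval_X, aeval_C]
      have : (algebraMap (KK p k) ℂ) c = α * α := rfl
      rw [this]
      ring
    have hmonic : (X ^ 2 - C c : Polynomial (KK p k)).Monic :=
      monic_X_pow_sub_C c two_ne_zero
    have hint : IsIntegral (KK p k) α := ⟨X ^ 2 - C c, hmonic, hroot⟩
    have hirr : Irreducible (X ^ 2 - C c : Polynomial (KK p k)) := by
      rw [X_pow_sub_C_irreducible_iff_of_prime Nat.prime_two]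
      intro b hb
      apply hα
      have hbc : ((b : ℂ)) * ((b : ℂ)) = α * α := by
        have h1 : ((b ^ 2 : KK p k) : ℂ) = ((c : KK p k) : ℂ) := congrArg _ hb
        push_cast at h1
        calc ((b : ℂ)) * b = (b : ℂ) ^ 2 := by ring
        _ = α * α := by rw [h1]
      rcases mul_self_eq_mul_self_iff.mp hbc with h | h
      · rw [← h]; exact b.2
      · rw [show α = ((-b : KK p k) : ℂ) by push_cast [h]; ring]
        exact (-b).2
    have hmin : minpoly (KK p k) α = X ^ 2 - C c :=
      (minpoly.eq_of_irreducible_of_monic hirr hroot hmonic).symm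
    have hfr2 : Module.finrank (KK p k) (IntermediateField.adjoin (KK p k) {α}) = 2 := by
      rw [IntermediateField.adjoin.finrank hint, hmin, natDegree_X_pow_sub_C]
    haveI hFD2 : FiniteDimensional (KK p k) (IntermediateField.adjoin (KK p k) {α}) :=
      IntermediateField.adjoin.finiteDimensional hint
    have hKK : KK p (k + 1) =
        (IntermediateField.adjoin (KK p k) {α}).restrictScalars ℚ := by
      unfold KK
      rw [set_insert_lemma hk, ← Set.union_singleton]
      exact (IntermediateField.adjoin_adjoin_left (F := ℚ) _ {α}).symm
    haveI : FiniteDimensional ℚ (IntermediateField.adjoin (KK p k) {α}) :=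
      FiniteDimensional.trans ℚ (KK p k) _
    constructor
    · rw [hKK]
      exact (inferInstance : FiniteDimensional ℚ (IntermediateField.adjoin (KK p k) {α}))
    · rw [hKK]
      have : Module.finrank ℚ ((IntermediateField.adjoin (KK p k) {α}).restrictScalars ℚ) =
          Module.finrank ℚ (IntermediateField.adjoin (KK p k) {α}) := rfl
      rw [this, ← Module.finrank_mul_finrank ℚ (KK p k)
        (IntermediateField.adjoin (KK p k) {α}), hfr, hfr2]
      ring

open Polynomial in
noncomputable def fpoly (p : Fin n → ℕ) : Polynomial ℚ :=
  ∏ j ∈ Finset.univ, ((X : Polynomial ℚ) ^ 2 - C (dq (p j)))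

open Polynomial in
lemma dq_lt_ne (hmono : StrictMono p) (h5 : ∀ j, 5 ≤ p j) {i j : Fin n} (hlt : i < j) :
    dq (p i) ≠ dq (p j) := by
  intro hij
  have hpij : p i < p j := hmono hlt
  have h1 : (p i) * (p i - 2) < (p j) * (p j - 2) := by
    have := h5 i; have := h5 j
    exact Nat.mul_lt_mul_of_lt_of_le hpij (by omega) (by omega)
  unfold dq at hij
  have h2 : ((p i * (p i - 2) : ℕ) : ℚ) = ((p j * (p j - 2) : ℕ) : ℚ) := by linarith [hij]
  exact absurd (Nat.cast_injective h2) (by omega)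

lemma dq_injective (hmono : StrictMono p) (h5 : ∀ j, 5 ≤ p j) :
    Function.Injective (fun j => dq (p j)) := by
  intro i j hij
  rcases lt_trichotomy i j with h | h | h
  · exact absurd hij (dq_lt_ne hmono h5 h)
  · exact h
  · exact absurd hij.symm (dq_lt_ne hmono h5 h)

open Polynomial in
lemma fpoly_separable (hmono : StrictMono p) (h5 : ∀ j, 5 ≤ p j) : (fpoly p).Separable := by
  apply separable_prod'
  · intro i _ j _ hij
    have hne : dq (p i) ≠ dq (p j) := fun h => hij (dq_injective hmono h5 h)
    set u : ℚ := (dq (p j) - dq (p i))⁻¹ with hu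
    refine ⟨C u, -C u, ?_⟩
    have h1 : C u * (X ^ 2 - C (dq (p i))) + -C u * (X ^ 2 - C (dq (p j))) =
        C u * (C (dq (p j)) - C (dq (p i))) := by ring
    rw [h1, ← C_sub, ← C_mul, hu,
      inv_mul_cancel₀ (sub_ne_zero.mpr (Ne.symm hne)), map_one]
  · intro j _
    exact separable_X_pow_sub_C (dq (p j)) (by norm_num) (dq_ne_zero (h5 j))

open Polynomial in
lemma fpoly_ne_zero : fpoly p ≠ 0 :=
  (monic_prod_of_monic _ _ fun j _ => monic_X_pow_sub_C (dq (p j)) two_ne_zero).ne_zero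

open Polynomial in
lemma aeval_fpoly (x : ℂ) :
    (aeval x) (fpoly p) = ∏ j ∈ Finset.univ, (x ^ 2 - ((dq (p j) : ℚ) : ℂ)) := by
  unfold fpoly
  rw [map_prod]
  refine Finset.prod_congr rfl fun j _ => ?_
  simp [eq_ratCast (algebraMap ℚ ℂ) (dq (p j))]

open Polynomial in
lemma adjoin_range_eq_adjoin_rootSet (h5 : ∀ j, 5 ≤ p j) :
    IntermediateField.adjoin ℚ (Set.range fun j : Fin n => xi (p j)) =
      IntermediateField.adjoin ℚ ((fpoly p).rootSet ℂ) := by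
  apply le_antisymm <;> rw [IntermediateField.adjoin_le_iff]
  · rintro x ⟨j, rfl⟩
    apply IntermediateField.subset_adjoin
    rw [mem_rootSet]
    refine ⟨fpoly_ne_zero, ?_⟩
    rw [aeval_fpoly]
    apply Finset.prod_eq_zero (Finset.mem_univ j)
    rw [sq, xi_mul_self (by have := h5 j; omega)]
    ring
  · intro x hx
    rw [mem_rootSet, aeval_fpoly] at hx
    obtain ⟨-, hx⟩ := hx
    obtain ⟨j, -, hj⟩ := Finset.prod_eq_zero_iff.mp hx
    have : x * x = xi (p j) * xi (p j) := by
      rw [xi_mul_self (by have := h5 j; omega)]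
      rw [sub_eq_zero] at hj
      rw [← sq, hj]
    rcases mul_self_eq_mul_self_iff.mp this with h | h
    · rw [h]
      exact IntermediateField.subset_adjoin ℚ _ ⟨j, rfl⟩
    · rw [h]
      exact neg_mem (IntermediateField.subset_adjoin ℚ _ ⟨j, rfl⟩ :
        xi (p j) ∈ IntermediateField.adjoin ℚ (Set.range fun j : Fin n => xi (p j)))

open Polynomial in
lemma isGalois_adjoin_range (hmono : StrictMono p) (h5 : ∀ j, 5 ≤ p j) :
    IsGalois ℚ (IntermediateField.adjoin ℚ (Set.range fun j : Fin n => xi (p j))) := by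
  rw [adjoin_range_eq_adjoin_rootSet h5]
  haveI := IntermediateField.adjoin_rootSet_isSplittingField
    (IsAlgClosed.splits ((fpoly p).map (algebraMap ℚ ℂ)))
  exact @IsGalois.of_separable_splitting_field _ _ _ _ _ _ this (fpoly_separable hmono h5)

open IntermediateField in
lemma aut_mul_self_eq_one (h5 : ∀ j, 5 ≤ p j)
    (σ : (adjoin ℚ (Set.range fun j : Fin n => xi (p j))) ≃ₐ[ℚ]
      (adjoin ℚ (Set.range fun j : Fin n => xi (p j)))) : σ * σ = 1 := by
  revert σ
  set L := adjoin ℚ (Set.range fun j : Fin n => xi (p j)) with hL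
  intro σ
  set g : Fin n → L := fun j => ⟨xi (p j), subset_adjoin ℚ _ ⟨j, rfl⟩⟩ with hg
  have hgen : adjoin ℚ (Set.range g) = (⊤ : IntermediateField ℚ L) := by
    apply L.lift_injective
    erw [lift_adjoin, lift_top]
    have himg : (Subtype.val '' Set.range g : Set ℂ) = Set.range fun j : Fin n => xi (p j) := by
      rw [← Set.range_comp]
      rfl
    rw [himg]
  have hfix : ∀ j, σ (σ (g j)) = g j := by
    intro j
    have hsq : g j * g j = algebraMap ℚ L (dq (p j)) := by
      apply Subtype.ext
      show xi (p j) * xi (p j) = ((algebraMap ℚ L (dq (p j)) : L) : ℂ)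
      rw [xi_mul_self (by have := h5 j; omega)]
      rfl
    have h2 : σ (g j) * σ (g j) = g j * g j := by
      rw [← map_mul, hsq, AlgEquiv.commutes, ← hsq]
    rcases mul_self_eq_mul_self_iff.mp h2 with h | h
    · rw [h, h]
    · rw [h, map_neg, h, neg_neg]
  let E : IntermediateField ℚ L :=
  { carrier := {x : L | σ (σ x) = x}
    mul_mem' := by
      intro x y hx hy
      simp only [Set.mem_setOf_eq, map_mul] at *
      rw [hx, hy]
    one_mem' := by simp
    add_mem' := by
      intro x y hx hy
      simp only [Set.mem_setOf_eq, map_add] at *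
      rw [hx, hy]
    zero_mem' := by simp
    algebraMap_mem' := fun q => by
      simp only [Set.mem_setOf_eq, AlgEquiv.commutes]
    inv_mem' := by
      intro x hx
      simp only [Set.mem_setOf_eq, map_inv₀] at *
      rw [hx] }
  have hle : adjoin ℚ (Set.range g) ≤ E := by
    rw [adjoin_le_iff]
    rintro x ⟨j, rfl⟩
    exact hfix j
  apply AlgEquiv.ext
  intro x
  have hx : x ∈ (⊤ : IntermediateField ℚ L) := trivial
  rw [← hgen] at hx
  have hxE : σ (σ x) = x := hle hx
  simpa [AlgEquiv.mul_apply] using hxE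

open IntermediateField in
lemma KK_top : KK p n = adjoin ℚ (Set.range fun j : Fin n => xi (p j)) := by
  unfold KK
  rw [show {j : Fin n | (j : ℕ) < n} = Set.univ from Set.eq_univ_of_forall fun j => j.2,
    Set.image_univ]

/-- For primes 5 ≤ p₁ < ⋯ < pₙ, the extension ℚ(ξ₁,…,ξₙ)/ℚ is Galois with
Galois group isomorphic to (ℤ/2ℤ)ⁿ. -/
theorem galois_adjoin_xi (n : ℕ) (hn : 1 ≤ n) (p : Fin n → ℕ)
    (hp : ∀ j, (p j).Prime) (hmono : StrictMono p) (h5 : ∀ j, 5 ≤ p j) :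
    IsGalois ℚ ↥(IntermediateField.adjoin ℚ (Set.range fun j : Fin n => xi (p j))) ∧
    Nonempty
      ((↥(IntermediateField.adjoin ℚ (Set.range fun j : Fin n => xi (p j))) ≃ₐ[ℚ]
        ↥(IntermediateField.adjoin ℚ (Set.range fun j : Fin n => xi (p j)))) ≃*
       (Fin n → Multiplicative (ZMod 2))) := by
  have hfin := finrank_KK hp hmono h5 n le_rfl
  rw [KK_top] at hfin
  obtain ⟨hFD, hfr⟩ := hfin
  haveI := hFD
  haveI hgal := isGalois_adjoin_range hmono h5
  refine ⟨hgal, ?_⟩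
  have hcard : Fintype.card
      ((IntermediateField.adjoin ℚ (Set.range fun j : Fin n => xi (p j))) ≃ₐ[ℚ]
        (IntermediateField.adjoin ℚ (Set.range fun j : Fin n => xi (p j)))) = 2 ^ n := by
    rw [Fintype.card_eq_nat_card, IsGalois.card_aut_eq_finrank, hfr]
  exact elem_abelian_two (aut_mul_self_eq_one h5) hcard
end

section
/- Let p₁ < p₂ < ⋯ be the (infinitely many) primes p with p ≥ 5 and p ≡ 1 (mod 4). For each such prime p set m_p = (p − 1)²/8 (an integer) and θ_p = arccos((4m_p − 1)/(4m_p)). Then the family of real numbers (θ_p), indexed by the primes p ≥ 5 with p ≡ 1 (mod 4), is linearly independent over ℚ: for any finitely many distinct such primes p₁, …, pₙ and integers c₁, …, cₙ, if c₁θ_{p₁} + ⋯ + cₙθ_{pₙ} = 0 then c₁ = ⋯ = cₙ = 0. -/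
open Finset Complex

/-! ### Auxiliary integer binomial expansions -/

noncomputable def Aint (a D N : ℕ) : ℤ :=
  ∑ k ∈ Finset.range (N+1), if k % 2 = 0 then (N.choose k : ℤ) * (a:ℤ)^(N-k) * (-(D:ℤ))^(k/2) else 0

noncomputable def Bint (a D N : ℕ) : ℤ :=
  ∑ k ∈ Finset.range (N+1), if k % 2 = 1 then (N.choose k : ℤ) * (a:ℤ)^(N-k) * (-(D:ℤ))^(k/2) else 0

lemma pow_eq_aint_bint (a D : ℕ) (x : ℂ) (hx : x^2 = -(D:ℂ)) (N : ℕ) :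
    ((a:ℂ) + x)^N = (Aint a D N : ℂ) + (Bint a D N : ℂ) * x := by
  have h1 : ((a:ℂ) + x)^N = (x + (a:ℂ))^N := by ring_nf
  rw [h1, add_pow]
  have h2 : ∀ k ∈ Finset.range (N+1),
      x ^ k * (a:ℂ) ^ (N - k) * (N.choose k : ℂ) =
      (if k % 2 = 0 then ((N.choose k : ℤ) * (a:ℤ)^(N-k) * (-(D:ℤ))^(k/2) : ℤ) else 0 : ℤ)
        + ((if k % 2 = 1 then ((N.choose k : ℤ) * (a:ℤ)^(N-k) * (-(D:ℤ))^(k/2) : ℤ) else 0 : ℤ) : ℂ) * x := by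
    intro k _
    have hk : k = 2 * (k / 2) + k % 2 := (Nat.div_add_mod k 2).symm.trans (by ring)
    have hxk : x ^ k = (-(D:ℂ))^(k/2) * x ^ (k % 2) := by
      conv_lhs => rw [hk]
      rw [pow_add, pow_mul, hx]
    rcases Nat.mod_two_eq_zero_or_one k with h | h <;> rw [h] at hxk ⊢ <;>
      simp [hxk] <;> push_cast <;> ring
  rw [Finset.sum_congr rfl h2, Finset.sum_add_distrib, ← Finset.sum_mul]
  push_cast [Aint, Bint, apply_ite]
  norm_num


lemma five_pow_ge (w : ℕ) (hw : 1 ≤ w) : 2*w + 3 ≤ 5^w := by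
  induction w with
  | zero => omega
  | succ w ih =>
    rcases Nat.eq_zero_or_pos w with h | h
    · subst h; norm_num
    · have h1 := ih h
      have h2 : 5^w ≥ 1 := Nat.one_le_pow _ _ (by norm_num)
      calc 2*(w+1) + 3 = (2*w+3) + 2 := by ring
        _ ≤ 5^w + 4*5^w := by omega
        _ = 5^(w+1) := by ring

lemma bint_ne_zero (p a D N : ℕ) (hp : p.Prime) (hp5 : 5 ≤ p) (hpD : p ∣ D)
    (hpa : ¬ p ∣ a) (hN : 1 ≤ N) : Bint a D N ≠ 0 := by
  classical
  set v := N.factorization p with hv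
  have h1mem : 1 ∈ Finset.range (N+1) := Finset.mem_range.mpr (by omega)
  have hsplit : Bint a D N = (N:ℤ) * (a:ℤ)^(N-1) +
      ∑ k ∈ (Finset.range (N+1)).erase 1,
        (if k % 2 = 1 then (N.choose k : ℤ) * (a:ℤ)^(N-k) * (-(D:ℤ))^(k/2) else 0) := by
    rw [Bint, ← Finset.add_sum_erase _ _ h1mem]
    norm_num
  have hdvd : ∀ k ∈ (Finset.range (N+1)).erase 1,
      (p:ℤ)^(v+1) ∣ (if k % 2 = 1 then (N.choose k : ℤ) * (a:ℤ)^(N-k) * (-(D:ℤ))^(k/2) else 0) := by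
    intro k hk
    rcases Nat.mod_two_eq_zero_or_one k with h | h
    · simp [h]
    rw [if_pos h]
    have hk1 : k ≠ 1 := (Finset.mem_erase.mp hk).1
    have hk3 : 3 ≤ k := by omega
    set w := k.factorization p with hw
    have hkne : k ≠ 0 := by omega
    have hDdvd : (p:ℤ)^(k/2) ∣ (-(D:ℤ))^(k/2) :=
      pow_dvd_pow_of_dvd ((dvd_neg).mpr (Int.natCast_dvd_natCast.mpr hpD)) _
    have hwk : w + 1 ≤ k / 2 := by
      rcases Nat.eq_zero_or_pos w with h0 | h0
      · omega
      · have hpw : p^w ∣ k := Nat.ordProj_dvd k p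
        have hle : p^w ≤ k := Nat.le_of_dvd (by omega) hpw
        have h5w : 5^w ≤ p^w := Nat.pow_le_pow_left hp5 w
        have := five_pow_ge w h0
        omega
    by_cases hvw : w ≤ v
    · have hchoose : (p:ℕ)^(v-w) ∣ N.choose k := by
        obtain ⟨m, rfl⟩ : ∃ m, N = m + 1 := ⟨N - 1, by omega⟩
        obtain ⟨l, rfl⟩ : ∃ l, k = l + 1 := ⟨k - 1, by omega⟩
        have hNdvd : (m+1) ∣ (l+1) * (m+1).choose (l+1) := by
          refine ⟨m.choose l, ?_⟩
          rw [mul_comm ((l:ℕ)+1) _, ← Nat.add_one_mul_choose_eq]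
        have hpv : p^v ∣ (l+1) * (m+1).choose (l+1) :=
          dvd_trans (dvd_trans (Nat.ordProj_dvd (m+1) p) hNdvd) dvd_rfl
        have hkfac : p^w * ((l+1) / p^w) = (l+1) := Nat.ordProj_mul_ordCompl_eq_self (l+1) p
        have hk' : ¬ p ∣ ((l+1) / p^w) := Nat.not_dvd_ordCompl hp hkne
        have hstep : p^w * p^(v-w) ∣ p^w * (((l+1) / p^w) * (m+1).choose (l+1)) := by
          rw [← pow_add, Nat.add_sub_cancel' hvw, ← mul_assoc, hkfac]
          exact hpv
        have h2 : p^(v-w) ∣ ((l+1) / p^w) * (m+1).choose (l+1) :=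
          (Nat.mul_dvd_mul_iff_left (pow_pos hp.pos w)).mp hstep
        have hcop : Nat.Coprime (p^(v-w)) ((l+1) / p^w) :=
          Nat.Coprime.pow_left _ ((Nat.Prime.coprime_iff_not_dvd hp).mpr hk')
        exact hcop.dvd_of_dvd_mul_left h2
      have hd1 : (p:ℤ)^(v-w) ∣ (N.choose k : ℤ) := by exact_mod_cast Int.natCast_dvd_natCast.mpr hchoose
      have hd2 : (p:ℤ)^(k/2) ∣ (a:ℤ)^(N-k) * (-(D:ℤ))^(k/2) := Dvd.dvd.mul_left hDdvd _
      have : (p:ℤ)^(v-w) * (p:ℤ)^(k/2) ∣ (N.choose k : ℤ) * ((a:ℤ)^(N-k) * (-(D:ℤ))^(k/2)) :=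
        mul_dvd_mul hd1 hd2
      rw [← pow_add] at this
      rw [mul_assoc]
      exact dvd_trans (pow_dvd_pow _ (by omega)) this
    · have h3 : (p:ℤ)^(v+1) ∣ (p:ℤ)^(k/2) := pow_dvd_pow _ (by omega)
      exact Dvd.dvd.mul_left (dvd_trans h3 hDdvd) _
  intro hB
  have hsum : (p:ℤ)^(v+1) ∣ ∑ k ∈ (Finset.range (N+1)).erase 1,
      (if k % 2 = 1 then (N.choose k : ℤ) * (a:ℤ)^(N-k) * (-(D:ℤ))^(k/2) else 0) :=
    Finset.dvd_sum hdvd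
  have hNa : (p:ℤ)^(v+1) ∣ (N:ℤ) * (a:ℤ)^(N-1) := by
    have : (N:ℤ) * (a:ℤ)^(N-1) = -(∑ k ∈ (Finset.range (N+1)).erase 1,
        (if k % 2 = 1 then (N.choose k : ℤ) * (a:ℤ)^(N-k) * (-(D:ℤ))^(k/2) else 0)) := by
      rw [hB] at hsplit; linarith [hsplit]
    rw [this]
    exact dvd_neg.mpr hsum
  have hNa' : p^(v+1) ∣ N * a^(N-1) := by
    have := hNa
    rw [show (N:ℤ) * (a:ℤ)^(N-1) = ((N * a^(N-1) : ℕ) : ℤ) by push_cast; ring,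
      show ((p:ℤ))^(v+1) = ((p^(v+1) : ℕ) : ℤ) by push_cast; ring] at this
    exact_mod_cast this
  have hcop : Nat.Coprime (p^(v+1)) (a^(N-1)) :=
    Nat.Coprime.pow _ _ ((Nat.Prime.coprime_iff_not_dvd hp).mpr hpa)
  have hdN : p^(v+1) ∣ N := hcop.dvd_of_dvd_mul_right hNa'
  exact Nat.pow_succ_factorization_not_dvd (by omega) hp hdN


/-- The set `F + F·α` as a subfield of ℝ, when `α² ∈ F` and `α ∉ F`. -/
noncomputable def quadExt (F : Subfield ℝ) (α : ℝ) (hsq : α * α ∈ F) (hα : α ∉ F) : Subfield ℝ where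
  carrier := {z | ∃ x ∈ F, ∃ y ∈ F, z = x + y * α}
  zero_mem' := ⟨0, F.zero_mem, 0, F.zero_mem, by ring⟩
  one_mem' := ⟨1, F.one_mem, 0, F.zero_mem, by ring⟩
  add_mem' := by
    rintro z w ⟨x, hx, y, hy, rfl⟩ ⟨x', hx', y', hy', rfl⟩
    exact ⟨x + x', F.add_mem hx hx', y + y', F.add_mem hy hy', by ring⟩
  neg_mem' := by
    rintro z ⟨x, hx, y, hy, rfl⟩
    exact ⟨-x, F.neg_mem hx, -y, F.neg_mem hy, by ring⟩
  mul_mem' := by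
    rintro z w ⟨x, hx, y, hy, rfl⟩ ⟨x', hx', y', hy', rfl⟩
    refine ⟨x * x' + y * y' * (α * α), ?_, x * y' + x' * y, ?_, by ring⟩
    · exact F.add_mem (F.mul_mem hx hx') (F.mul_mem (F.mul_mem hy hy') hsq)
    · exact F.add_mem (F.mul_mem hx hy') (F.mul_mem hx' hy)
  inv_mem' := by
    rintro z ⟨x, hx, y, hy, rfl⟩
    by_cases hz : x + y * α = 0
    · rw [hz]
      exact ⟨0, F.zero_mem, 0, F.zero_mem, by simp⟩
    · set t := x * x - y * y * (α * α) with ht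
      have htF : t ∈ F := F.sub_mem (F.mul_mem hx hx) (F.mul_mem (F.mul_mem hy hy) hsq)
      have htne : t ≠ 0 := by
        intro h0
        have hxy : x * x = y * y * (α * α) := by
          have := ht ▸ h0; linarith [sub_eq_zero.mp this]
        by_cases hy0 : y = 0
        · apply hz
          have hx0 : x = 0 := by
            have : x * x = 0 := by rw [hxy, hy0]; ring
            exact mul_self_eq_zero.mp this
          rw [hx0, hy0]; ring
        · have h1 : α * α = (x / y) * (x / y) := by
            field_simp
            nlinarith [hxy]
          rcases mul_self_eq_mul_self_iff.mp h1 with hcase | hcase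
          · exact hα (hcase ▸ F.div_mem hx hy)
          · exact hα (hcase ▸ F.neg_mem (F.div_mem hx hy))
      refine ⟨x / t, F.div_mem hx htF, -(y / t), F.neg_mem (F.div_mem hy htF), ?_⟩
      have hmul : (x + y * α) * (x / t + -(y / t) * α) = 1 := by
        field_simp
        ring
      exact inv_eq_of_mul_eq_one_right hmul

lemma mem_quadExt (F : Subfield ℝ) (α : ℝ) (hsq : α * α ∈ F) (hα : α ∉ F) (z : ℝ)
    (hz : z ∈ quadExt F α hsq hα) : ∃ x ∈ F, ∃ y ∈ F, z = x + y * α := hz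

/-- If `√e` lies in the subfield of `ℝ` generated by the `√(d j)`, `j ∈ T`, then
`e` times some subproduct of the `d j` is a square. -/
lemma sqrt_mem_closure {n : ℕ} (d : Fin n → ℕ) (hd : ∀ j, 0 < d j) (T : Finset (Fin n)) :
    ∀ e : ℕ, 0 < e →
    Real.sqrt e ∈ Subfield.closure ((fun j => Real.sqrt (d j)) '' ↑T) →
    ∃ S ⊆ T, IsSquare (e * ∏ j ∈ S, d j) := by
  classical
  induction T using Finset.induction_on with
  | empty =>
    intro e he hmem
    refine ⟨∅, Finset.Subset.refl _, ?_⟩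
    rw [Finset.prod_empty, mul_one]
    have hbot : Subfield.closure ((fun j => Real.sqrt (d j)) '' (↑(∅ : Finset (Fin n)))) ≤
        (Rat.castHom ℝ).fieldRange := by
      apply Subfield.closure_le.mpr
      simp
    obtain ⟨q, hq⟩ := hbot hmem
    by_contra hns
    exact (irrational_sqrt_natCast_iff.mpr hns) ⟨q, hq⟩
  | @insert t T htT ih =>
    intro e he hmem
    set s : Fin n → ℝ := fun j => Real.sqrt (d j) with hs
    set F : Subfield ℝ := Subfield.closure (s '' ↑T) with hF
    have himg : s '' ↑(insert t T) = insert (s t) (s '' ↑T) := by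
      rw [Finset.coe_insert, Set.image_insert_eq]
    by_cases hcase : s t ∈ F
    · have hle : Subfield.closure (s '' ↑(insert t T)) ≤ F := by
        apply Subfield.closure_le.mpr
        rw [himg]
        exact Set.insert_subset hcase Subfield.subset_closure
      obtain ⟨S, hST, hSq⟩ := ih e he (hle hmem)
      exact ⟨S, hST.trans (Finset.subset_insert t T), hSq⟩
    · have hsq : s t * s t ∈ F := by
        have : s t * s t = ((d t : ℕ) : ℝ) := Real.mul_self_sqrt (Nat.cast_nonneg _)
        rw [this]
        exact natCast_mem F (d t)
      have hle : Subfield.closure (s '' ↑(insert t T)) ≤ quadExt F (s t) hsq hcase := by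
        apply Subfield.closure_le.mpr
        rw [himg]
        refine Set.insert_subset ⟨0, F.zero_mem, 1, F.one_mem, by ring⟩ ?_
        intro z hz
        exact ⟨z, Subfield.subset_closure hz, 0, F.zero_mem, by ring⟩
      obtain ⟨x, hx, y, hy, hxy⟩ := hle hmem
      have hesq : (e : ℝ) = x * x + y * y * (s t * s t) + (2 * x * y) * s t := by
        have h1 : Real.sqrt e * Real.sqrt e = (e : ℝ) := Real.mul_self_sqrt (Nat.cast_nonneg _)
        rw [← h1, hxy]; ring
      by_cases hy0 : y = 0
      · subst hy0
        have : Real.sqrt e ∈ F := by rw [hxy]; simpa using hx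
        obtain ⟨S, hST, hSq⟩ := ih e he this
        exact ⟨S, hST.trans (Finset.subset_insert t T), hSq⟩
      · by_cases hx0 : x = 0
        · subst hx0
          have hmem' : Real.sqrt (((e * d t : ℕ) : ℝ)) ∈ F := by
            have heq : Real.sqrt (((e * d t : ℕ) : ℝ)) = y * (d t : ℝ) := by
              rw [show ((e * d t : ℕ) : ℝ) = (e:ℝ) * (d t : ℝ) by push_cast; ring,
                Real.sqrt_mul (Nat.cast_nonneg _), hxy, zero_add, mul_assoc,
                Real.mul_self_sqrt (Nat.cast_nonneg _)]
            rw [heq]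
            exact F.mul_mem hy (natCast_mem F (d t))
          obtain ⟨S, hST, hSq⟩ := ih (e * d t) (Nat.mul_pos he (hd t)) hmem'
          refine ⟨insert t S, Finset.insert_subset_insert t hST, ?_⟩
          rw [Finset.prod_insert (fun hc => htT (hST hc)), ← mul_assoc]
          exact hSq
        · exfalso
          apply hcase
          have h2xy : (2 * x * y) ≠ 0 := by
            simp [hx0, hy0]
          have hst : s t = ((e:ℝ) - x * x - y * y * (s t * s t)) / (2 * x * y) := by
            field_simp
            linarith [hesq]
          rw [hst]
          exact F.div_mem
            (F.sub_mem (F.sub_mem (natCast_mem F e) (F.mul_mem hx hx))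
              (F.mul_mem (F.mul_mem hy hy) hsq))
            (F.mul_mem (F.mul_mem (natCast_mem F 2) hx) hy)


lemma sqrt_prods_indep {n : ℕ} (d : Fin n → ℕ) (hd : ∀ j, 0 < d j)
    (hnsq : ∀ S : Finset (Fin n), S.Nonempty → ¬ IsSquare (∏ j ∈ S, d j))
    (T : Finset (Fin n)) :
    ∀ q : Finset (Fin n) → ℝ, (∀ S, ∃ r : ℚ, q S = r) →
    (∑ S ∈ T.powerset, q S * ∏ j ∈ S, Real.sqrt (d j)) = 0 →
    ∀ S ∈ T.powerset, q S = 0 := by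
  classical
  set s : Fin n → ℝ := fun j => Real.sqrt (d j) with hs
  induction T using Finset.induction_on with
  | empty =>
    intro q hq hsum S hS
    rw [Finset.powerset_empty, Finset.mem_singleton] at hS
    subst hS
    simpa using hsum
  | @insert t T htT ih =>
    intro q hq hsum S hS
    rw [Finset.sum_powerset_insert htT] at hsum
    have hins : ∀ U ∈ T.powerset, q (insert t U) * ∏ j ∈ insert t U, s j
        = (q (insert t U) * ∏ j ∈ U, s j) * s t := by
      intro U hU
      rw [Finset.prod_insert (fun hc => htT ((Finset.mem_powerset.mp hU) hc))]
      ring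
    rw [Finset.sum_congr rfl hins, ← Finset.sum_mul] at hsum
    set X := ∑ S ∈ T.powerset, q S * ∏ j ∈ S, s j with hX
    set Y := ∑ U ∈ T.powerset, q (insert t U) * ∏ j ∈ U, s j with hY
    -- memberships in the closure subfield
    set F : Subfield ℝ := Subfield.closure (s '' ↑T) with hF
    have hmemterm : ∀ (qq : Finset (Fin n) → ℝ), (∀ S, ∃ r : ℚ, qq S = r) →
        (∑ S ∈ T.powerset, qq S * ∏ j ∈ S, s j) ∈ F := by
      intro qq hqq
      apply Subfield.sum_mem
      intro U hU
      obtain ⟨r, hr⟩ := hqq U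
      apply F.mul_mem
      · rw [hr]; exact SubfieldClass.ratCast_mem F r
      · apply Subfield.prod_mem
        intro j hj
        exact Subfield.subset_closure ⟨j, by
          simpa using (Finset.mem_powerset.mp hU) hj, rfl⟩
    have hXF : X ∈ F := hmemterm q hq
    have hYF : Y ∈ F := hmemterm (fun U => q (insert t U)) (fun U => hq _)
    have hY0 : Y = 0 := by
      by_contra hY0
      have hstF : s t ∈ F := by
        have : s t = -X / Y := by
          field_simp
          linarith [hsum]
        rw [this]
        exact F.div_mem (F.neg_mem hXF) hYF
      obtain ⟨S', hS'T, hSq⟩ := sqrt_mem_closure d hd T (d t) (hd t) hstF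
      refine hnsq (insert t S') ⟨t, Finset.mem_insert_self t S'⟩ ?_
      rwa [Finset.prod_insert (fun hc => htT (hS'T hc))]
    have hX0 : X = 0 := by
      rw [hY0, zero_mul, add_zero] at hsum
      exact hsum
    have hqT : ∀ U ∈ T.powerset, q U = 0 := ih q hq hX0
    have hqT' : ∀ U ∈ T.powerset, q (insert t U) = 0 :=
      ih (fun U => q (insert t U)) (fun U => hq _) hY0
    rw [Finset.mem_powerset] at hS
    by_cases htS : t ∈ S
    · have : S = insert t (S.erase t) := by rw [Finset.insert_erase htS]
      rw [this]
      apply hqT'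
      rw [Finset.mem_powerset]
      intro x hx
      have := hS (Finset.mem_of_mem_erase hx)
      rcases Finset.mem_insert.mp this with h | h
      · exact absurd h (Finset.ne_of_mem_erase hx)
      · exact h
    · apply hqT
      rw [Finset.mem_powerset]
      intro x hx
      rcases Finset.mem_insert.mp (hS hx) with h | h
      · subst h; exact absurd hx htS
      · exact h


lemma prods_not_square {n : ℕ} (p : Fin n → ℕ) (hinj : Function.Injective p)
    (hp : ∀ j, (p j).Prime) (h5 : ∀ j, 5 ≤ p j)
    (S : Finset (Fin n)) (hS : S.Nonempty) :
    ¬ IsSquare (∏ j ∈ S, p j * (p j - 2)) := by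
  classical
  obtain ⟨jm, hjm, hmax⟩ := S.exists_max_image p hS
  set q := p jm with hq
  rintro ⟨r, hr⟩
  have hd0 : ∀ j, p j * (p j - 2) ≠ 0 := by
    intro j
    have h := h5 j
    have : 0 < p j * (p j - 2) := Nat.mul_pos (by omega) (by omega)
    omega
  have hprod0 : (∏ j ∈ S, p j * (p j - 2)) ≠ 0 := Finset.prod_ne_zero_iff.mpr (fun j _ => hd0 j)
  have hfac : (∏ j ∈ S, p j * (p j - 2)).factorization q
      = ∑ j ∈ S, (p j * (p j - 2)).factorization q := by
    rw [Nat.factorization_prod (fun j _ => hd0 j)]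
    simp
  have hterm : ∀ j ∈ S, (p j * (p j - 2)).factorization q = if j = jm then 1 else 0 := by
    intro j hjS
    have hpj := h5 j
    by_cases hj : j = jm
    · subst hj
      rw [if_pos rfl, Nat.factorization_mul (by omega) (by omega)]
      have h1 : (p j).factorization (p j) = 1 := by
        rw [(hp j).factorization]; simp
      have h2 : (p j - 2).factorization (p j) = 0 := by
        apply Nat.factorization_eq_zero_of_not_dvd
        intro hdvd
        have := Nat.le_of_dvd (by omega) hdvd
        omega
      simp [hq, h1, h2]
    · rw [if_neg hj]
      have hne : p j ≠ q := fun hc => hj (hinj hc)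
      have hlt : p j < q := lt_of_le_of_ne (hmax j hjS) hne
      rw [Nat.factorization_mul (by omega) (by omega)]
      have h1 : (p j).factorization q = 0 := by
        apply Nat.factorization_eq_zero_of_not_dvd
        intro hdvd
        exact hne ((Nat.prime_dvd_prime_iff_eq (hp jm) (hp j)).mp hdvd).symm
      have h2 : (p j - 2).factorization q = 0 := by
        apply Nat.factorization_eq_zero_of_not_dvd
        intro hdvd
        have := Nat.le_of_dvd (by omega) hdvd
        omega
      simp [h1, h2]
  have hsum1 : (∏ j ∈ S, p j * (p j - 2)).factorization q = 1 := by
    rw [hfac, Finset.sum_congr rfl hterm, Finset.sum_ite_eq' S jm (fun _ => 1), if_pos hjm]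
  have hr0 : r ≠ 0 := by
    intro h0; rw [h0, mul_zero] at hr; exact hprod0 hr
  have heven : (∏ j ∈ S, p j * (p j - 2)).factorization q = 2 * r.factorization q := by
    rw [hr, Nat.factorization_mul hr0 hr0]
    simp [two_mul]
  omega


lemma I_pow_int (k : ℕ) : ∃ x y : ℤ, (Complex.I)^k = (x:ℂ) + (y:ℂ) * Complex.I := by
  induction k with
  | zero => exact ⟨1, 0, by simp⟩
  | succ k ih =>
    obtain ⟨x, y, hxy⟩ := ih
    exact ⟨-y, x, by rw [pow_succ, hxy]; push_cast; ring_nf; rw [Complex.I_sq]; ring⟩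

/-- m_p = (p − 1)²/8 as a real number. -/
noncomputable def mreal (p : ℕ) : ℝ := ((p : ℝ) - 1) ^ 2 / 8

/-- θ_p = arccos((4m_p − 1)/(4m_p)). -/
noncomputable def theta (p : ℕ) : ℝ :=
  Real.arccos ((4 * mreal p - 1) / (4 * mreal p))

/-- The numbers θ_p, for distinct primes p ≥ 5 with p ≡ 1 (mod 4), are linearly
independent over ℚ: any vanishing integer linear combination is trivial. -/
theorem theta_linearIndependent (n : ℕ) (p : Fin n → ℕ)
    (hinj : Function.Injective p) (hp : ∀ j, (p j).Prime)
    (h5 : ∀ j, 5 ≤ p j) (h4 : ∀ j, p j % 4 = 1) (c : Fin n → ℤ)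
    (h : ∑ j : Fin n, (c j : ℝ) * theta (p j) = 0) :
    ∀ j, c j = 0 := by
  classical
  intro j₀
  by_contra hc0
  -- basic numerology
  set b : Fin n → ℕ := fun j => 2 * ((p j - 1)/2)^2 with hbdef
  set a : Fin n → ℕ := fun j => b j - 1 with hadef
  set d : Fin n → ℕ := fun j => p j * (p j - 2) with hddef
  have hb2 : ∀ j, 2 * b j = (p j - 1)^2 := by
    intro j
    obtain ⟨u, hu⟩ : ∃ u, p j = 2*u + 3 := ⟨(p j - 3)/2, by have := h4 j; have := h5 j; omega⟩
    have h1 : (p j - 1)/2 = u + 1 := by omega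
    have h2 : p j - 1 = 2*u + 2 := by omega
    show 2 * (2 * ((p j - 1)/2)^2) = (p j - 1)^2
    rw [h1, h2]
    ring
  have hb8 : ∀ j, 8 ≤ b j := by
    intro j
    have h1 : 2 ≤ (p j - 1)/2 := by have := h5 j; omega
    have : 4 ≤ ((p j - 1)/2)^2 := by nlinarith
    simp only [hbdef]; omega
  have hd2b : ∀ j, d j + 1 = 2 * b j := by
    intro j
    rw [hb2 j]
    obtain ⟨u, hu⟩ : ∃ u, p j = 2*u + 3 := ⟨(p j - 3)/2, by have := h4 j; have := h5 j; omega⟩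
    have h2 : p j - 1 = 2*u + 2 := by omega
    have h3 : p j - 2 = 2*u + 1 := by omega
    show p j * (p j - 2) + 1 = (p j - 1)^2
    rw [h3, h2, hu]
    ring
  have hd0 : ∀ j, 0 < d j := by
    intro j; have := h5 j
    exact Nat.mul_pos (by omega) (by omega)
  have ha1 : ∀ j, a j + 1 = b j := by intro j; have := hb8 j; simp only [hadef]; omega
  have hpa : ∀ j, ¬ p j ∣ a j := by
    intro j hdvd
    have hpd : p j ∣ d j := dvd_mul_right _ _
    have h1 : d j - 2 * a j = 1 := by have := hd2b j; have := ha1 j; omega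
    have h2 : p j ∣ d j - 2 * a j := Nat.dvd_sub hpd (Dvd.dvd.mul_left hdvd 2)
    rw [h1] at h2
    have := Nat.le_of_dvd one_pos h2
    have := h5 j
    omega
  -- real facts
  set s : Fin n → ℝ := fun j => Real.sqrt (d j) with hsdef
  have hbR : ∀ j, 4 * mreal (p j) = (b j : ℝ) := by
    intro j
    have h1 : ((p j : ℝ) - 1) = ((p j - 1 : ℕ) : ℝ) := by
      have := h5 j; push_cast [Nat.cast_sub (by omega : 1 ≤ p j)]; ring
    have h2 : (2 : ℝ) * (b j : ℝ) = ((p j - 1 : ℕ) : ℝ)^2 := by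
      exact_mod_cast congrArg (Nat.cast : ℕ → ℝ) (hb2 j)
    rw [mreal, h1]
    rw [← h2]
    ring
  have hbpos : ∀ j, (0:ℝ) < (b j : ℝ) := by
    intro j; have := hb8 j; positivity
  have haR : ∀ j, (a j : ℝ) = (b j : ℝ) - 1 := by
    intro j; have := ha1 j
    have : ((a j + 1 : ℕ) : ℝ) = (b j : ℝ) := by exact_mod_cast congrArg (Nat.cast : ℕ → ℝ) this
    push_cast at this; linarith
  have hdR : ∀ j, (d j : ℝ) = 2 * (b j : ℝ) - 1 := by
    intro j; have := hd2b j
    have : ((d j + 1 : ℕ) : ℝ) = 2 * (b j : ℝ) := by exact_mod_cast congrArg (Nat.cast : ℕ → ℝ) this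
    push_cast at this; linarith
  have hs_nonneg : ∀ j, 0 ≤ s j := fun j => Real.sqrt_nonneg _
  have hs_sq : ∀ j, s j ^ 2 = (d j : ℝ) := fun j => Real.sq_sqrt (Nat.cast_nonneg _)
  -- step 1 : exponential form
  have hexp : ∀ j, Complex.exp ((theta (p j) : ℂ) * I)
      = ((a j : ℂ) + (s j : ℂ) * I) / (b j : ℂ) := by
    intro j
    have hab1 : (a j : ℝ) / (b j : ℝ) ≤ 1 := by
      rw [div_le_one (hbpos j)]; rw [haR j]; linarith
    have hab0 : (0:ℝ) ≤ (a j : ℝ) / (b j : ℝ) := by positivity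
    have hth : theta (p j) = Real.arccos ((a j : ℝ) / (b j : ℝ)) := by
      rw [theta, hbR j, haR j]
    have hcos : Real.cos (theta (p j)) = (a j : ℝ) / (b j : ℝ) := by
      rw [hth]; exact Real.cos_arccos (by linarith) hab1
    have hsin : Real.sin (theta (p j)) = s j / (b j : ℝ) := by
      rw [hth, Real.sin_arccos]
      have h1 : 1 - ((a j : ℝ)/(b j : ℝ))^2 = (s j / (b j : ℝ))^2 := by
        have hbne : (b j : ℝ) ≠ 0 := ne_of_gt (hbpos j)
        rw [div_pow, div_pow, hs_sq j, haR j, hdR j]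
        field_simp
        ring
      rw [h1, Real.sqrt_sq (by positivity)]
    rw [Complex.exp_mul_I]
    rw [← Complex.ofReal_cos, ← Complex.ofReal_sin, hcos, hsin]
    push_cast
    have hbne : (b j : ℂ) ≠ 0 := by
      have := hb8 j
      exact_mod_cast (show ((b j : ℕ) : ℂ) ≠ (0:ℕ) by exact_mod_cast (by omega : b j ≠ 0))
    field_simp
  -- step 2 : product identity
  set w : Fin n → ℂ := fun j => ((a j : ℂ) + (s j : ℂ) * I) / (b j : ℂ) with hwdef
  have hprod : ∏ j, w j ^ (c j) = 1 := by
    have h1 : Complex.exp ((((∑ j, (c j : ℝ) * theta (p j)) : ℝ) : ℂ) * I) = 1 := by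
      rw [h]; simp
    have h2 : (((∑ j, (c j : ℝ) * theta (p j)) : ℝ) : ℂ) * I
        = ∑ j, (c j : ℂ) * ((theta (p j) : ℂ) * I) := by
      push_cast
      rw [Finset.sum_mul]
      exact Finset.sum_congr rfl (fun j _ => by ring)
    rw [h2, Complex.exp_sum] at h1
    calc ∏ j, w j ^ (c j)
        = ∏ j, Complex.exp ((c j : ℂ) * ((theta (p j) : ℂ) * I)) := by
          refine Finset.prod_congr rfl (fun j _ => ?_)
          rw [Complex.exp_int_mul, hexp j]
      _ = 1 := h1
  -- step 3 : integer expansion of each factor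
  set N : Fin n → ℕ := fun j => (c j).natAbs with hNdef
  set A : Fin n → ℤ := fun j => Aint (a j) (d j) (N j) with hAdef
  set B : Fin n → ℤ := fun j => Bint (a j) (d j) (N j) with hBdef
  set sg : Fin n → ℤ := fun j => if 0 ≤ c j then 1 else -1 with hsgdef
  have hbne : ∀ j, (b j : ℂ) ≠ 0 := by
    intro j
    have := hb8 j
    exact_mod_cast (show ((b j : ℕ) : ℂ) ≠ ((0:ℕ):ℂ) by exact_mod_cast (by omega : b j ≠ 0))
  have hxsq : ∀ j, ((s j : ℂ) * I)^2 = -((d j : ℕ) : ℂ) := by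
    intro j
    rw [mul_pow, Complex.I_sq]
    have h1 : ((s j : ℝ) : ℂ)^2 = ((d j : ℕ) : ℂ) := by
      rw [← Complex.ofReal_pow, hs_sq j]
      push_cast
      ring
    rw [h1]
    ring
  have habd : ∀ j, (a j : ℂ)^2 + ((d j : ℕ) : ℂ) = (b j : ℂ)^2 := by
    intro j
    have h1 : ((a j : ℕ) : ℝ)^2 + ((d j : ℕ) : ℝ) = ((b j : ℕ) : ℝ)^2 := by
      rw [haR j, hdR j]; ring
    exact_mod_cast congrArg (Complex.ofReal) h1
  have hpow : ∀ j, w j ^ (c j)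
      = ((A j : ℂ) + (sg j : ℂ) * (B j : ℂ) * (s j : ℂ) * I) / (b j : ℂ)^(N j) := by
    intro j
    have key := pow_eq_aint_bint (a j) (d j) ((s j : ℂ) * I) (hxsq j) (N j)
    rcases le_or_gt 0 (c j) with hcj | hcj
    · have hc : c j = (N j : ℤ) := by simp only [hNdef]; omega
      have hsg : sg j = 1 := if_pos hcj
      rw [hc, zpow_natCast, hwdef]
      simp only
      rw [div_pow, key, hsg]
      simp only [hAdef, hBdef]
      push_cast
      ring_nf
    · have hc : c j = -(N j : ℤ) := by simp only [hNdef]; omega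
      have hsg : sg j = -1 := if_neg (by omega)
      have key' := pow_eq_aint_bint (a j) (d j) (-((s j : ℂ) * I)) (by rw [neg_pow]; simp [hxsq j]) (N j)
      have hnorm : ((A j : ℂ) + (B j : ℂ) * ((s j : ℂ) * I))
          * ((A j : ℂ) + (B j : ℂ) * (-((s j : ℂ) * I))) = ((b j : ℂ)^(N j))^2 := by
        rw [← key, ← key']
        have heq : ((a j : ℂ) + (s j : ℂ) * I) * ((a j : ℂ) + -((s j : ℂ) * I))
            = (b j : ℂ)^2 := by
          calc ((a j : ℂ) + (s j : ℂ) * I) * ((a j : ℂ) + -((s j : ℂ) * I))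
              = (a j : ℂ)^2 - ((s j : ℂ) * I)^2 := by ring
            _ = (a j : ℂ)^2 + ((d j : ℕ) : ℂ) := by rw [hxsq j]; ring
            _ = (b j : ℂ)^2 := habd j
        rw [← mul_pow, heq, ← pow_mul, ← pow_mul, Nat.mul_comm]
      rw [hc, zpow_neg, zpow_natCast, hwdef]
      simp only
      rw [div_pow, key]
      have hAne : ((b j : ℂ)^(N j)) ≠ 0 := pow_ne_zero _ (hbne j)
      have hfac : ((A j : ℂ) + (B j : ℂ) * ((s j : ℂ) * I)) / (b j : ℂ)^(N j)
          * (((A j : ℂ) + (sg j : ℂ) * (B j : ℂ) * (s j : ℂ) * I) / (b j : ℂ)^(N j)) = 1 := by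
        rw [div_mul_div_comm, hsg]
        rw [show ((A j : ℂ) + (-1 : ℤ) * (B j : ℂ) * (s j : ℂ) * I)
            = ((A j : ℂ) + (B j : ℂ) * (-((s j : ℂ) * I))) by push_cast; ring]
        rw [hnorm, ← sq]
        exact div_self (pow_ne_zero _ hAne)
      exact inv_eq_of_mul_eq_one_right hfac
  -- step 4 : clear denominators and expand
  set R : ℕ := ∏ j, (b j)^(N j) with hRdef
  have hRpos : 0 < R := Finset.prod_pos (fun j _ => pow_pos (by have := hb8 j; omega) _)
  have hU : ∏ j, ((sg j : ℂ) * (B j : ℂ) * (s j : ℂ) * I + (A j : ℂ)) = (R : ℂ) := by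
    have h1 : ∏ j, w j ^ (c j)
        = (∏ j, ((sg j : ℂ) * (B j : ℂ) * (s j : ℂ) * I + (A j : ℂ))) / (∏ j, (b j : ℂ)^(N j)) := by
      rw [← Finset.prod_div_distrib]
      refine Finset.prod_congr rfl (fun j _ => ?_)
      rw [hpow j]
      ring_nf
    rw [h1] at hprod
    have h2 : (∏ j, (b j : ℂ)^(N j)) = (R : ℂ) := by
      rw [hRdef]
      push_cast
      rfl
    rw [h2] at hprod
    have hRne : (R : ℂ) ≠ 0 := by
      exact_mod_cast (show ((R:ℕ):ℂ) ≠ ((0:ℕ):ℂ) by exact_mod_cast (by omega : R ≠ 0))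
    field_simp at hprod
    rw [hprod]
  rw [Finset.prod_add] at hU
  set G : Finset (Fin n) → ℤ := fun S => (∏ j ∈ S, sg j * B j) * ∏ j ∈ Finset.univ \ S, A j
    with hGdef
  have hterm : ∀ S ∈ (Finset.univ : Finset (Fin n)).powerset,
      (∏ j ∈ S, (sg j : ℂ) * (B j : ℂ) * (s j : ℂ) * I) * (∏ j ∈ Finset.univ \ S, (A j : ℂ))
      = (((G S : ℝ) * ∏ j ∈ S, s j : ℝ) : ℂ) * I ^ S.card := by
    intro S _
    have h1 : ∏ j ∈ S, (sg j : ℂ) * (B j : ℂ) * (s j : ℂ) * I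
        = (∏ j ∈ S, ((sg j * B j : ℤ) : ℂ)) * (∏ j ∈ S, ((s j : ℝ) : ℂ)) * I ^ S.card := by
      rw [← Finset.prod_const, ← Finset.prod_mul_distrib, ← Finset.prod_mul_distrib]
      refine Finset.prod_congr rfl (fun j _ => ?_)
      push_cast
      ring
    rw [h1, hGdef]
    push_cast
    ring
  rw [Finset.sum_congr rfl hterm] at hU
  -- not-square hypothesis
  have hnsq : ∀ S : Finset (Fin n), S.Nonempty → ¬ IsSquare (∏ j ∈ S, d j) := by
    intro S hS
    simpa only [hddef] using prods_not_square p hinj hp h5 S hS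
  -- imaginary part
  have hIm : ∑ S ∈ (Finset.univ : Finset (Fin n)).powerset,
      ((G S : ℝ) * ((I : ℂ) ^ S.card).im) * ∏ j ∈ S, s j = 0 := by
    have h0 := congrArg Complex.im hU
    rw [Complex.im_sum] at h0
    have h2 : ∀ S ∈ (Finset.univ : Finset (Fin n)).powerset,
        ((((G S : ℝ) * ∏ j ∈ S, s j : ℝ) : ℂ) * I ^ S.card).im
        = ((G S : ℝ) * ((I : ℂ) ^ S.card).im) * ∏ j ∈ S, s j := by
      intro S _
      rw [Complex.mul_im, Complex.ofReal_re, Complex.ofReal_im]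
      ring
    rw [Finset.sum_congr rfl h2] at h0
    simpa using h0
  have hqIm : ∀ S : Finset (Fin n), ∃ r : ℚ, (G S : ℝ) * ((I : ℂ) ^ S.card).im = (r : ℝ) := by
    intro S
    obtain ⟨x, y, hxy⟩ := I_pow_int S.card
    refine ⟨(G S * y : ℤ), ?_⟩
    rw [hxy]
    simp only [Complex.add_im, Complex.mul_im, Complex.intCast_im, Complex.intCast_re,
      Complex.I_im, Complex.I_re]
    push_cast
    ring
  have himzero := sqrt_prods_indep d hd0 hnsq Finset.univ
    (fun S => (G S : ℝ) * ((I : ℂ) ^ S.card).im) hqIm hIm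
  have hGj₀ : G {j₀} = 0 := by
    have := himzero {j₀} (Finset.mem_powerset.mpr (Finset.subset_univ _))
    simp only [Finset.card_singleton, pow_one, Complex.I_im, mul_one] at this
    exact_mod_cast this
  -- real part
  have hRe : ∑ S ∈ (Finset.univ : Finset (Fin n)).powerset,
      ((G S : ℝ) * ((I : ℂ) ^ S.card).re - if S = ∅ then (R:ℝ) else 0) * ∏ j ∈ S, s j = 0 := by
    have h0 := congrArg Complex.re hU
    rw [Complex.re_sum] at h0
    have h2 : ∀ S ∈ (Finset.univ : Finset (Fin n)).powerset,
        ((((G S : ℝ) * ∏ j ∈ S, s j : ℝ) : ℂ) * I ^ S.card).re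
        = ((G S : ℝ) * ((I : ℂ) ^ S.card).re) * ∏ j ∈ S, s j := by
      intro S _
      rw [Complex.mul_re, Complex.ofReal_re, Complex.ofReal_im]
      ring
    rw [Finset.sum_congr rfl h2] at h0
    have h3 : ∑ S ∈ (Finset.univ : Finset (Fin n)).powerset,
        (if S = ∅ then (R:ℝ) else 0) * ∏ j ∈ S, s j = (R:ℝ) := by
      rw [Finset.sum_eq_single_of_mem (∅ : Finset (Fin n))
        (Finset.empty_mem_powerset _) (fun S _ hne => by rw [if_neg hne, zero_mul])]
      rw [if_pos rfl, Finset.prod_empty, mul_one]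
    simp only [sub_mul, Finset.sum_sub_distrib]
    rw [h3, h0]
    simp
  have hqRe : ∀ S : Finset (Fin n), ∃ r : ℚ,
      (G S : ℝ) * ((I : ℂ) ^ S.card).re - (if S = ∅ then (R:ℝ) else 0) = (r : ℝ) := by
    intro S
    obtain ⟨x, y, hxy⟩ := I_pow_int S.card
    refine ⟨(G S * x : ℤ) - (if S = ∅ then (R:ℤ) else 0), ?_⟩
    rw [hxy]
    simp only [Complex.add_re, Complex.mul_re, Complex.intCast_im, Complex.intCast_re,
      Complex.I_im, Complex.I_re]
    split_ifs <;> push_cast <;> ring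
  have hrezero := sqrt_prods_indep d hd0 hnsq Finset.univ
    (fun S => (G S : ℝ) * ((I : ℂ) ^ S.card).re - (if S = ∅ then (R:ℝ) else 0)) hqRe hRe
  have hGempty : G ∅ = (R : ℤ) := by
    have := hrezero ∅ (Finset.mem_powerset.mpr (Finset.subset_univ _))
    simp only [Finset.card_empty, pow_zero, Complex.one_re, mul_one, if_pos,
      sub_eq_zero] at this
    exact_mod_cast this
  -- conclude B j₀ = 0
  have hAprod : ∏ j, A j = (R : ℤ) := by
    rw [← hGempty, hGdef]
    simp
  have hRne : (R : ℤ) ≠ 0 := by exact_mod_cast (by omega : R ≠ 0)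
  have hsplitA : ∏ j, A j = A j₀ * ∏ j ∈ Finset.univ.erase j₀, A j :=
    (Finset.mul_prod_erase Finset.univ A (Finset.mem_univ j₀)).symm
  have herasene : ∏ j ∈ Finset.univ.erase j₀, A j ≠ 0 := by
    intro h0
    rw [hAprod] at hsplitA
    rw [h0, mul_zero] at hsplitA
    exact hRne hsplitA
  have hGj₀' : (sg j₀ * B j₀) * ∏ j ∈ Finset.univ.erase j₀, A j = 0 := by
    rw [← hGj₀, hGdef]
    simp [Finset.erase_eq]
  have hsgB : sg j₀ * B j₀ = 0 := by
    rcases mul_eq_zero.mp hGj₀' with h0 | h0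
    · exact h0
    · exact absurd h0 herasene
  have hB0 : B j₀ = 0 := by
    rcases (if 0 ≤ c j₀ then Or.inl rfl else Or.inr rfl : sg j₀ = sg j₀ ∨ sg j₀ = sg j₀) with _ | _
    all_goals {
      by_cases hcj : 0 ≤ c j₀
      · rw [hsgdef] at hsgB; simp only [if_pos hcj] at hsgB; omega
      · rw [hsgdef] at hsgB; simp only [if_neg hcj] at hsgB; omega
    }
  -- final contradiction
  have hN1 : 1 ≤ N j₀ := by simp only [hNdef]; omega
  exact bint_ne_zero (p j₀) (a j₀) (d j₀) (N j₀) (hp j₀) (h5 j₀)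
    (dvd_mul_right _ _) (hpa j₀) hN1 hB0
end

section
/- For every integer m ≥ 1, the complex number z_m = ((4m − 1) + i·√(8m − 1))/(4m) is not a root of unity; that is, there is no integer r ≥ 1 with (z_m)ʳ = 1. -/
/-- Auxiliary integer sequence: t n = (2m)^n (z^n + conj z ^ n). -/
def tseq (m : ℕ) : ℕ → ℤ
  | 0 => 2
  | 1 => 4 * (m : ℤ) - 1
  | (n+2) => (4 * (m : ℤ) - 1) * tseq m (n+1) - 4 * (m : ℤ)^2 * tseq m n

lemma tseq_odd (m : ℕ) : ∀ n : ℕ, Odd (tseq m (n+1)) := by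
  intro n
  induction n with
  | zero => exact ⟨2 * (m : ℤ) - 1, by simp [tseq]; ring⟩
  | succ k ih =>
      have h1 : Odd ((4 * (m : ℤ) - 1) * tseq m (k+1)) :=
        Odd.mul ⟨2 * (m : ℤ) - 1, by ring⟩ ih
      have h2 : Even (4 * (m : ℤ)^2 * tseq m k) :=
        ⟨2 * (m : ℤ)^2 * tseq m k, by ring⟩
      have := h1.sub_even h2
      simpa [tseq] using this

lemma tseq_eq (m : ℕ) (u v : ℂ) (hsum : u + v = 4 * (m : ℂ) - 1)
    (hprod : u * v = 4 * (m : ℂ)^2) :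
    ∀ n : ℕ, ((tseq m n : ℤ) : ℂ) = u^n + v^n := by
  intro n
  induction n using Nat.twoStepInduction with
  | zero => simp [tseq]; norm_num
  | one => simp only [tseq, pow_one]; push_cast; exact hsum.symm
  | more k ih2 ih1 =>
      show ((tseq m (k+2) : ℤ) : ℂ) = _
      rw [show tseq m (k+2) = (4 * (m : ℤ) - 1) * tseq m (k+1) - 4 * (m : ℤ)^2 * tseq m k from rfl]
      push_cast
      rw [ih1, ih2]
      linear_combination (-(u^(k+1) + v^(k+1))) * hsum + (u^k + v^k) * hprod

/-- For every integer m ≥ 1, the complex number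
z_m = ((4m − 1) + i·√(8m − 1))/(4m) is not a root of unity. -/
theorem zm_not_root_of_unity (m : ℕ) (hm : 1 ≤ m) :
    ¬ ∃ r : ℕ, 1 ≤ r ∧
      (((4 * (m : ℂ) - 1) + Complex.I * (Real.sqrt (8 * (m : ℝ) - 1) : ℝ)) /
        (4 * (m : ℂ))) ^ r = 1 := by
  rintro ⟨r, hr, hzr⟩
  set s : ℝ := Real.sqrt (8 * (m : ℝ) - 1) with hs_def
  have hm0 : (m : ℂ) ≠ 0 := by
    exact_mod_cast Nat.cast_ne_zero.mpr (by omega)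
  have hmne : (4 : ℂ) * (m : ℂ) ≠ 0 := by
    simp [hm0]
  have hs_nonneg : (0:ℝ) ≤ 8 * (m : ℝ) - 1 := by
    have : (1:ℝ) ≤ (m : ℝ) := by exact_mod_cast hm
    linarith
  have hs2 : (s : ℂ)^2 = 8 * (m : ℂ) - 1 := by
    have h : s^2 = 8 * (m : ℝ) - 1 := Real.sq_sqrt hs_nonneg
    rw [← Complex.ofReal_pow, h]
    push_cast
    ring
  set z : ℂ := ((4 * (m : ℂ) - 1) + Complex.I * (s : ℂ)) / (4 * (m : ℂ)) with hz_def
  set w : ℂ := ((4 * (m : ℂ) - 1) - Complex.I * (s : ℂ)) / (4 * (m : ℂ)) with hw_def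
  set u : ℂ := 2 * (m : ℂ) * z with hu_def
  set v : ℂ := 2 * (m : ℂ) * w with hv_def
  have hsum : u + v = 4 * (m : ℂ) - 1 := by
    rw [hu_def, hv_def, hz_def, hw_def]
    field_simp
    ring
  have hprod : u * v = 4 * (m : ℂ)^2 := by
    rw [hu_def, hv_def, hz_def, hw_def]
    field_simp
    linear_combination (-4*(s:ℂ)^2) * Complex.I_sq + 4 * hs2
  have hwconj : (starRingEnd ℂ) z = w := by
    rw [hz_def, hw_def]
    simp [map_div₀, map_add, map_sub, map_mul, Complex.conj_I, Complex.conj_ofReal, map_ofNat]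
    ring
  have hwr : w^r = 1 := by
    rw [← hwconj, ← map_pow, hzr, map_one]
  have hur : u^r = (2 * (m : ℂ))^r := by
    rw [hu_def, mul_pow, hzr, mul_one]
  have hvr : v^r = (2 * (m : ℂ))^r := by
    rw [hv_def, mul_pow, hwr, mul_one]
  have hkey : ((tseq m r : ℤ) : ℂ) = ((2 * (2 * (m : ℤ))^r : ℤ) : ℂ) := by
    rw [tseq_eq m u v hsum hprod r, hur, hvr]
    push_cast
    ring
  have hint : tseq m r = 2 * (2 * (m : ℤ))^r := by exact_mod_cast hkey
  obtain ⟨n, rfl⟩ : ∃ n, r = n + 1 := ⟨r - 1, by omega⟩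
  obtain ⟨k, hk⟩ := tseq_odd m n
  rw [hint] at hk
  have : Even (2 * (2 * (m : ℤ))^(n+1)) := ⟨(2 * (m : ℤ))^(n+1), by ring⟩
  obtain ⟨j, hj⟩ := this
  omega
end
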